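/- arXiv:2003.00622 — 7 statements merged into one kernel-verified Lean document; each statement's English description precedes it below -/
import Mathlib

section
/- Let G be an n-vertex graph with no path of length ℓ (ℓ edges). Then G has at most (ℓ−1)n/2 edges. -/
namespace EG

open SimpleGraph Finset List

variable {V : Type*} {G : SimpleGraph V}

/-- Take the first `n` edges of a walk. -/
def wtake {u v : V} : (p : G.Walk u v) → (n : ℕ) → G.Walk u (p.getVert n)
  | .nil, _ => .nil
  | .cons _ _, 0 => .nil
  | .cons h q, (n+1) => .cons h (wtake q n)

/-- Drop the first `n` edges of a walk. -/
def wdrop {u v : V} : (p : G.Walk u v) → (n : ℕ) → G.Walk (p.getVert n) v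
  | .nil, _ => .nil
  | .cons h q, 0 => .cons h q
  | .cons h q, (n+1) => wdrop q n

lemma wtake_length {u v : V} (p : G.Walk u v) (n : ℕ) (hn : n ≤ p.length) :
    (wtake p n).length = n := by
  induction p generalizing n with
  | nil => simp at hn; simp [hn, wtake]
  | cons h q ih =>
    cases n with
    | zero => rfl
    | succ n => simpa [wtake] using ih n (by simpa using hn)

lemma wdrop_length {u v : V} (p : G.Walk u v) (n : ℕ) :
    (wdrop p n).length = p.length - n := by
  induction p generalizing n with
  | nil => simp [wdrop]
  | cons h q ih =>
    cases n with
    | zero => rfl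
    | succ n => simpa [wdrop] using ih n

lemma wtake_support {u v : V} (p : G.Walk u v) (n : ℕ) :
    (wtake p n).support = p.support.take (n+1) := by
  induction p generalizing n with
  | nil => cases n <;> simp [wtake]
  | cons h q ih =>
    cases n with
    | zero => simp [wtake]; rfl
    | succ n => simp [wtake, ih]

lemma wdrop_support {u v : V} (p : G.Walk u v) (n : ℕ) (hn : n ≤ p.length) :
    (wdrop p n).support = p.support.drop n := by
  induction p generalizing n with
  | nil => simp at hn; simp [hn, wdrop]
  | cons h q ih =>
    cases n with
    | zero => rfl
    | succ n => simpa [wdrop] using ih n (by simpa using hn)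

lemma IsPath.wtake {u v : V} {p : G.Walk u v} (hp : p.IsPath) (n : ℕ) :
    (wtake p n).IsPath := by
  rw [SimpleGraph.Walk.isPath_def, wtake_support]
  exact (List.take_sublist _ _).nodup (SimpleGraph.Walk.isPath_def _ |>.mp hp)

lemma IsPath.wdrop {u v : V} {p : G.Walk u v} (hp : p.IsPath) (n : ℕ) (hn : n ≤ p.length) :
    (wdrop p n).IsPath := by
  rw [SimpleGraph.Walk.isPath_def, wdrop_support _ _ hn]
  exact (List.drop_sublist _ _).nodup (SimpleGraph.Walk.isPath_def _ |>.mp hp)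

lemma IsPath.concat' {u v w : V} {p : G.Walk u v} (hp : p.IsPath) (h : G.Adj v w)
    (hw : w ∉ p.support) : (p.concat h).IsPath := by
  rw [SimpleGraph.Walk.isPath_def, SimpleGraph.Walk.support_concat]
  rw [List.nodup_append']
  exact ⟨(SimpleGraph.Walk.isPath_def _).mp hp, List.nodup_singleton _,
    by simpa [List.disjoint_singleton] using hw⟩

lemma getVert_injOn {u v : V} {p : G.Walk u v} (hp : p.IsPath) :
    ∀ a b, a ≤ p.length → b ≤ p.length → p.getVert a = p.getVert b → a = b := by
  induction p with
  | nil => intro a b ha hb _; simp only [SimpleGraph.Walk.length_nil, Nat.le_zero] at ha hb; omega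
  | cons h q ih =>
    intro a b ha hb hab
    rw [SimpleGraph.Walk.cons_isPath_iff] at hp
    match a, b with
    | 0, 0 => rfl
    | 0, b+1 =>
      exfalso
      apply hp.2
      rw [SimpleGraph.Walk.getVert_zero] at hab
      rw [SimpleGraph.Walk.mem_support_iff_exists_getVert]
      exact ⟨b, by simpa [SimpleGraph.Walk.getVert_cons_succ] using hab.symm, by simpa using hb⟩
    | a+1, 0 =>
      exfalso
      apply hp.2
      rw [SimpleGraph.Walk.mem_support_iff_exists_getVert]
      exact ⟨a, by simpa [SimpleGraph.Walk.getVert_cons_succ] using hab, by simpa using ha⟩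
    | a+1, b+1 =>
      have := ih hp.1 a b (by simpa using ha) (by simpa using hb)
        (by simpa [SimpleGraph.Walk.getVert_cons_succ] using hab)
      omega

lemma mem_support_iff_mem_tail {u : V} {w : G.Walk u u} (hw : ¬w.Nil) (x : V) :
    x ∈ w.support ↔ x ∈ w.support.tail := by
  rw [← SimpleGraph.Walk.support_tail_of_not_nil w hw, ← SimpleGraph.Walk.cons_support_tail hw,
    List.mem_cons]
  constructor
  · rintro (rfl | hx)
    · exact w.tail.end_mem_support
    · exact hx
  · exact Or.inr

open SimpleGraph.Walk in
/-- Core lemma: if every non-isolated vertex has degree ≥ ℓ/2 and there is no path with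
exactly ℓ edges, then the component of any non-isolated vertex has at most ℓ vertices. -/
lemma core {V : Type*} [Fintype V] [DecidableEq V] (ℓ : ℕ) (G : SimpleGraph V)
    [DecidableRel G.Adj]
    (hfree : ∀ (u v : V) (p : G.Walk u v), p.IsPath → p.length ≠ ℓ)
    (hdeg : ∀ w : V, G.degree w ≠ 0 → ℓ ≤ 2 * G.degree w)
    (v : V) (hv : G.degree v ≠ 0) :
    {w | G.Reachable v w}.ncard ≤ ℓ := by
  classical
  by_contra hbig
  push_neg at hbig
  set S : ℕ → Prop := fun n => ∃ (a b : V) (p : G.Walk a b),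
    p.IsPath ∧ G.Reachable v a ∧ p.length = n with hS
  have hSbound : ∀ n, S n → n ≤ Fintype.card V := by
    rintro n ⟨a, b, p, hp, -, rfl⟩
    exact hp.length_lt.le
  set k := Nat.findGreatest S (Fintype.card V) with hkdef
  have hSk : S k := by
    have h0 : S 0 := ⟨v, v, Walk.nil, by simp, Reachable.refl v, rfl⟩
    exact Nat.findGreatest_spec (Nat.zero_le _) h0
  have hmax : ∀ (a b : V) (p : G.Walk a b), p.IsPath → G.Reachable v a → p.length ≤ k := by
    intro a b p hp hr
    by_contra hlen
    push_neg at hlen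
    exact Nat.findGreatest_is_greatest hlen (hSbound _ ⟨a, b, p, hp, hr, rfl⟩)
      ⟨a, b, p, hp, hr, rfl⟩
  have hkl : k < ℓ := by
    by_contra hkl
    push_neg at hkl
    obtain ⟨a, b, p, hp, hr, hlen⟩ := hSk
    exact hfree a _ (wtake p ℓ) (IsPath.wtake hp ℓ) (wtake_length p ℓ (by omega))
  obtain ⟨x0, xk, p, hp, hreach, hplen⟩ := hSk
  have hk1 : 1 ≤ k := by
    obtain ⟨z, hz⟩ := G.degree_pos_iff_exists_adj v |>.mp (Nat.pos_of_ne_zero hv)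
    have := hmax v z (Walk.cons hz Walk.nil)
      (by simp [Walk.cons_isPath_iff, hz.ne]) (Reachable.refl v)
    simpa using this
  have hext0 : ∀ z, G.Adj x0 z → z ∈ p.support := by
    intro z hz
    by_contra hzs
    have := hmax z xk (Walk.cons hz.symm p)
      (by rw [Walk.cons_isPath_iff]; exact ⟨hp, hzs⟩) (hreach.trans hz.reachable)
    rw [Walk.length_cons, hplen] at this; omega
  have hextk : ∀ z, G.Adj xk z → z ∈ p.support := by
    intro z hz
    by_contra hzs
    have := hmax x0 z (p.concat hz) (IsPath.concat' hp hz hzs) hreach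
    rw [Walk.length_concat, hplen] at this; omega
  have hsupp : ∀ w, w ∈ p.support → G.Reachable v w := fun w hw =>
    hreach.trans ⟨p.takeUntil w hw⟩
  have hout : ∃ z, G.Reachable v z ∧ z ∉ p.support := by
    by_contra h
    push_neg at h
    have hsub : {w | G.Reachable v w} ⊆ {w | w ∈ p.support} := h
    have h1 := Set.ncard_le_ncard hsub (Set.toFinite _)
    have h2 : {w | w ∈ p.support}.ncard ≤ p.support.length := by
      rw [show {w | w ∈ p.support} = ↑p.support.toFinset by ext w; simp]
      rw [Set.ncard_coe_finset]
      exact List.toFinset_card_le _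
    rw [Walk.length_support, hplen] at h2
    omega
  obtain ⟨z, hzr, hzs⟩ := hout
  obtain ⟨W⟩ := hreach.symm.trans hzr
  obtain ⟨d, hd, hdf, hds⟩ := W.exists_boundary_dart {w | w ∈ p.support} p.start_mem_support hzs
  have hadjjy : G.Adj d.fst d.snd := d.adj
  by_cases hj0 : d.fst = x0
  · exact hds (hext0 d.snd (hj0 ▸ hadjjy))
  by_cases hjk : d.fst = xk
  · exact hds (hextk d.snd (hjk ▸ hadjjy))
  obtain ⟨m, hm, hmle⟩ := Walk.mem_support_iff_exists_getVert.mp hdf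
  have hk2 : 2 ≤ k := by
    have hm0 : m ≠ 0 := by rintro rfl; rw [Walk.getVert_zero] at hm; exact hj0 hm.symm
    have hmk : m ≠ p.length := by
      rintro rfl; rw [Walk.getVert_length] at hm; exact hjk hm.symm
    omega
  -- pigeonhole
  set A := Finset.filter (fun i => G.Adj x0 (p.getVert (i+1))) (Finset.range k) with hAdef
  set B := Finset.filter (fun i => G.Adj xk (p.getVert i)) (Finset.range k) with hBdef
  have hA : G.degree x0 ≤ A.card := by
    apply Finset.card_le_card_of_surjOn (fun i => p.getVert (i+1))
    intro znb hznb
    have hadj : G.Adj x0 znb := by simpa using hznb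
    obtain ⟨n, hn, hnle⟩ := Walk.mem_support_iff_exists_getVert.mp (hext0 znb hadj)
    have hn0 : n ≠ 0 := by
      rintro rfl; rw [Walk.getVert_zero] at hn; exact hadj.ne hn
    refine ⟨n - 1, ?_, ?_⟩
    · simp only [hAdef, Finset.coe_filter, Set.mem_setOf_eq, Finset.mem_range]
      constructor
      · omega
      · rw [show n - 1 + 1 = n by omega]; rw [hn]; exact hadj
    · show p.getVert (n - 1 + 1) = znb
      rw [show n - 1 + 1 = n by omega]; exact hn
  have hB : G.degree xk ≤ B.card := by
    apply Finset.card_le_card_of_surjOn (fun i => p.getVert i)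
    intro znb hznb
    have hadj : G.Adj xk znb := by simpa using hznb
    obtain ⟨n, hn, hnle⟩ := Walk.mem_support_iff_exists_getVert.mp (hextk znb hadj)
    have hnk : n ≠ p.length := by
      rintro rfl; rw [Walk.getVert_length] at hn; exact hadj.ne hn
    refine ⟨n, ?_, hn⟩
    simp only [hBdef, Finset.coe_filter, Set.mem_setOf_eq, Finset.mem_range]
    exact ⟨by omega, hn ▸ hadj⟩
  have hdeg0 : G.degree x0 ≠ 0 := by
    have : G.Adj x0 (p.getVert 1) := by
      have := p.adj_getVert_succ (i := 0) (by omega)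
      rwa [Walk.getVert_zero] at this
    have := G.degree_pos_iff_exists_adj x0 |>.mpr ⟨_, this⟩
    omega
  have hdegk : G.degree xk ≠ 0 := by
    have : G.Adj (p.getVert (p.length - 1)) (p.getVert (p.length - 1 + 1)) :=
      p.adj_getVert_succ (by omega)
    rw [show p.length - 1 + 1 = p.length by omega, Walk.getVert_length] at this
    have := G.degree_pos_iff_exists_adj xk |>.mpr ⟨_, this.symm⟩
    omega
  have hinter : (A ∩ B).Nonempty := by
    rw [← Finset.card_pos]
    have h1 := Finset.card_union_add_card_inter A B
    have h2 : (A ∪ B).card ≤ k := by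
      refine le_trans (Finset.card_le_card ?_) (Finset.card_range k).le
      intro x hx
      rcases Finset.mem_union.mp hx with hx | hx
      · exact Finset.mem_of_mem_filter _ hx
      · exact Finset.mem_of_mem_filter _ hx
    have h3 := hdeg x0 hdeg0
    have h4 := hdeg xk hdegk
    omega
  obtain ⟨i, hi⟩ := hinter
  rw [Finset.mem_inter, hAdef, hBdef, Finset.mem_filter, Finset.mem_filter,
    Finset.mem_range] at hi
  obtain ⟨⟨hik, hiA⟩, -, hiB⟩ := hi
  -- build the cycle
  have hi1len : i + 1 ≤ p.length := by omega
  set tk : G.Walk x0 (p.getVert i) := wtake p i with htkdef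
  set q2 : G.Walk (p.getVert (i+1)) xk := wdrop p (i+1) with hq2def
  set r : G.Walk (p.getVert (i+1)) x0 := q2.append (Walk.cons hiB tk.reverse) with hrdef
  set c : G.Walk x0 x0 := Walk.cons hiA r with hcdef
  have hnodup : p.support.Nodup := (Walk.isPath_def p).mp hp
  have htksupp : tk.support = p.support.take (i+1) := wtake_support p i
  have hq2supp : q2.support = p.support.drop (i+1) := wdrop_support p (i+1) hi1len
  have hrsupp : r.support = p.support.drop (i+1) ++ (p.support.take (i+1)).reverse := by
    rw [hrdef, Walk.support_append, Walk.support_cons, List.tail_cons, Walk.support_reverse,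
      htksupp, hq2supp]
  have hsplit : p.support.take (i+1) ++ p.support.drop (i+1) = p.support :=
    List.take_append_drop _ _
  have hdisj : ∀ a, a ∈ p.support.take (i+1) → a ∈ p.support.drop (i+1) → False := by
    have h' : (p.support.take (i+1) ++ p.support.drop (i+1)).Nodup := by
      rw [hsplit]; exact hnodup
    rw [List.nodup_append'] at h'
    exact fun a ha hb => h'.2.2 ha hb
  have hx0take : x0 ∈ p.support.take (i+1) := by rw [← htksupp]; exact tk.start_mem_support
  have hgi1drop : p.getVert (i+1) ∈ p.support.drop (i+1) := by
    rw [← hq2supp]; exact q2.start_mem_support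
  have hrpath : r.IsPath := by
    rw [Walk.isPath_def, hrsupp, List.nodup_append']
    refine ⟨(List.drop_sublist _ _).nodup hnodup,
      List.nodup_reverse.mpr ((List.take_sublist _ _).nodup hnodup), ?_⟩
    intro a ha hb
    rw [List.mem_reverse] at hb
    exact hdisj a hb ha
  have hne0k : x0 ≠ xk := by
    intro h
    have := getVert_injOn hp 0 p.length (by omega) le_rfl
      ((p.getVert_zero).trans (h.trans (p.getVert_length).symm))
    omega
  have hedge : s(x0, p.getVert (i+1)) ∉ r.edges := by
    intro he
    rw [hrdef, Walk.edges_append] at he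
    rcases List.mem_append.mp he with he | he
    · have := Walk.fst_mem_support_of_mem_edges q2 he
      rw [hq2supp] at this
      exact hdisj x0 hx0take this
    · rw [Walk.edges_cons] at he
      rcases List.mem_cons.mp he with he | he
      · rcases Sym2.eq_iff.mp he with ⟨h1, h2⟩ | ⟨h1, h2⟩
        · exact hne0k h1
        · have hieq := getVert_injOn hp 0 i (by omega) (by omega)
            ((p.getVert_zero).trans h1)
          have hik2 := getVert_injOn hp (i+1) p.length (by omega) le_rfl
            (h2.trans (p.getVert_length).symm)
          omega
      · rw [Walk.edges_reverse, List.mem_reverse] at he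
        have := Walk.snd_mem_support_of_mem_edges tk he
        rw [htksupp] at this
        exact hdisj _ this hgi1drop
  have hcyc : c.IsCycle := by
    rw [hcdef, Walk.cons_isCycle_iff]
    exact ⟨hrpath, hedge⟩
  have hcsupp : ∀ w, w ∈ c.support ↔ w ∈ p.support := by
    intro w
    rw [hcdef, Walk.support_cons, List.mem_cons, hrsupp]
    constructor
    · rintro (rfl | hw)
      · exact p.start_mem_support
      · rcases List.mem_append.mp hw with hw | hw
        · exact (List.drop_sublist _ _).subset hw
        · exact (List.take_sublist _ _).subset (List.mem_reverse.mp hw)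
    · intro hw
      right
      rw [List.mem_append, List.mem_reverse]
      rw [← hsplit, List.mem_append] at hw
      tauto
  have hclen : c.length = k + 1 := by
    rw [hcdef, Walk.length_cons, hrdef, Walk.length_append, Walk.length_cons,
      Walk.length_reverse, hq2def, htkdef, wdrop_length, wtake_length p i (by omega)]
    omega
  have hxjc : d.fst ∈ c.support := (hcsupp d.fst).mpr hdf
  set c' := c.rotate _ hxjc with hc'def
  have hc'cyc : c'.IsCycle := hcyc.rotate hxjc
  have hc'supp : ∀ w, w ∈ c'.support ↔ w ∈ c.support := fun w =>
    ((mem_support_iff_mem_tail hc'cyc.not_nil w).trans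
      (Walk.support_rotate c _ hxjc).mem_iff).trans (mem_support_iff_mem_tail hcyc.not_nil w).symm
  have hc'len : c'.length = c.length := by
    have h1 := (Walk.rotate_darts c _ hxjc).perm.length_eq
    rwa [Walk.length_darts, Walk.length_darts] at h1
  obtain ⟨w1, hadj1, q, hq⟩ := Walk.not_nil_iff.mp hc'cyc.not_nil
  have hqpath : q.IsPath := by
    have h2 := hc'cyc
    rw [hq, Walk.cons_isCycle_iff] at h2
    exact h2.1
  have hqlen : q.length = k := by
    have h2 : c'.length = q.length + 1 := by rw [hq, Walk.length_cons]
    omega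
  have hqsub : ∀ w, w ∈ q.support → w ∈ p.support := by
    intro w hw
    have h2 : w ∈ c'.support := by
      rw [hq, Walk.support_cons]; exact List.mem_cons_of_mem _ hw
    exact (hcsupp w).mp ((hc'supp w).mp h2)
  have hyq : d.snd ∉ q.support := fun h => hds (hqsub d.snd h)
  have hfin := hmax w1 d.snd (q.concat hadjjy) (IsPath.concat' hqpath hadjjy hyq)
    (hsupp w1 (hqsub w1 q.start_mem_support))
  rw [Walk.length_concat, hqlen] at hfin
  omega

lemma degle {V : Type*} [Fintype V] [DecidableEq V] (ℓ : ℕ) (G : SimpleGraph V)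
    [DecidableRel G.Adj]
    (hfree : ∀ (u v : V) (p : G.Walk u v), p.IsPath → p.length ≠ ℓ)
    (hdeg : ∀ w : V, G.degree w ≠ 0 → ℓ ≤ 2 * G.degree w)
    (v : V) (hv : G.degree v ≠ 0) : G.degree v + 1 ≤ ℓ := by
  have hcomp := core ℓ G hfree hdeg v hv
  have h1 : (G.neighborSet v).ncard = G.degree v := by
    rw [← Nat.card_coe_set_eq, Nat.card_eq_fintype_card, card_neighborSet_eq_degree]
  have h2 : G.neighborSet v ⊆ {w | G.Reachable v w} \ {v} := by
    intro w hw
    exact ⟨(hw : G.Adj v w).reachable, (hw : G.Adj v w).ne'⟩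
  have h3 : ({w | G.Reachable v w} \ {v}).ncard = {w | G.Reachable v w}.ncard - 1 :=
    Set.ncard_diff_singleton_of_mem (Reachable.refl v)
  have h4 : 0 < {w | G.Reachable v w}.ncard :=
    (Set.ncard_pos (Set.toFinite _)).mpr ⟨v, Reachable.refl v⟩
  have h5 := Set.ncard_le_ncard h2 (Set.toFinite _)
  omega

lemma main' {V : Type*} [Fintype V] (ℓ : ℕ) (hℓ : 0 < ℓ) :
    ∀ (m : ℕ) (G : SimpleGraph V) [DecidableRel G.Adj], G.edgeFinset.card = m →
    (∀ (u v : V) (p : G.Walk u v), p.IsPath → p.length ≠ ℓ) →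
    2 * G.edgeFinset.card ≤ (ℓ - 1) * (Finset.univ.filter (fun w => G.degree w ≠ 0)).card := by
  intro m
  induction m using Nat.strong_induction_on with
  | _ m ih =>
    intro G _ hm hfree
    classical
    by_cases hcase : ∃ w, G.degree w ≠ 0 ∧ 2 * G.degree w < ℓ
    · obtain ⟨v, hv0, hvsmall⟩ := hcase
      set G' := G.deleteEdges (G.incidenceSet v) with hG'
      haveI : DecidableRel G'.Adj := Classical.decRel _
      have hle : G' ≤ G := G.deleteEdges_le _
      have hfree' : ∀ (u w : V) (p : G'.Walk u w), p.IsPath → p.length ≠ ℓ := by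
        intro u w p hp hlen
        exact hfree u w (p.mapLe hle) (hp.mapLe hle) (by simpa [Walk.mapLe] using hlen)
      have hsub : G.incidenceFinset v ⊆ G.edgeFinset := by
        simp [incidenceFinset, incidenceSet_subset]
      have hef : G'.edgeFinset = G.edgeFinset \ G.incidenceFinset v := by
        ext e
        simp only [mem_edgeFinset, hG', edgeSet_deleteEdges, Set.mem_diff,
          Finset.mem_sdiff, incidenceFinset, Set.mem_toFinset]
      have hcard' : G'.edgeFinset.card = G.edgeFinset.card - G.degree v := by
        rw [hef, Finset.card_sdiff_of_subset hsub, card_incidenceFinset_eq_degree]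
      have hdegle : G.degree v ≤ G.edgeFinset.card := by
        rw [← card_incidenceFinset_eq_degree]; exact Finset.card_le_card hsub
      have hlt : G'.edgeFinset.card < m := by omega
      have ihres := ih _ hlt G' rfl hfree'
      have hdegmono : ∀ w, G'.degree w ≤ G.degree w := by
        intro w
        apply Finset.card_le_card
        intro x hx
        rw [mem_neighborFinset] at hx ⊢
        exact hle hx
      have hdegv' : G'.degree v = 0 := by
        rw [SimpleGraph.degree, Finset.card_eq_zero, Finset.eq_empty_iff_forall_notMem]
        intro w hw
        rw [mem_neighborFinset, hG', deleteEdges_adj] at hw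
        exact hw.2 ⟨hw.1.symm.symm, by simp⟩
      have hsupp' : (univ.filter fun w => G'.degree w ≠ 0) ⊆
          (univ.filter fun w => G.degree w ≠ 0) \ {v} := by
        intro w hw
        simp only [Finset.mem_filter, Finset.mem_univ, true_and] at hw
        rw [Finset.mem_sdiff, Finset.mem_filter, Finset.mem_singleton]
        refine ⟨⟨Finset.mem_univ _, fun h0 => hw (by have := hdegmono w; omega)⟩, ?_⟩
        rintro rfl
        exact hw hdegv'
      have hvmem : v ∈ (univ.filter fun w => G.degree w ≠ 0) := by
        simp [hv0]
      have hsc : (univ.filter fun w => G'.degree w ≠ 0).card + 1 ≤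
          (univ.filter fun w => G.degree w ≠ 0).card := by
        have h1 := Finset.card_le_card hsupp'
        have h2 : ((univ.filter fun w => G.degree w ≠ 0) \ {v}).card =
            (univ.filter fun w => G.degree w ≠ 0).card - 1 := by
          rw [Finset.card_sdiff_of_subset (by simpa using hvmem), Finset.card_singleton]
        have h3 : 1 ≤ (univ.filter fun w => G.degree w ≠ 0).card :=
          Finset.card_pos.mpr ⟨v, hvmem⟩
        omega
      calc 2 * G.edgeFinset.card
          = 2 * G'.edgeFinset.card + 2 * G.degree v := by omega
        _ ≤ (ℓ - 1) * (univ.filter fun w => G'.degree w ≠ 0).card + (ℓ - 1) := by omega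
        _ = (ℓ - 1) * ((univ.filter fun w => G'.degree w ≠ 0).card + 1) := by ring
        _ ≤ (ℓ - 1) * (univ.filter fun w => G.degree w ≠ 0).card :=
            Nat.mul_le_mul_left _ hsc
    · push_neg at hcase
      have hdeg : ∀ w, G.degree w ≠ 0 → ℓ ≤ 2 * G.degree w := hcase
      have hdle : ∀ w ∈ (univ.filter fun w => G.degree w ≠ 0), G.degree w ≤ ℓ - 1 := by
        intro w hw
        simp only [Finset.mem_filter, Finset.mem_univ, true_and] at hw
        have := degle ℓ G hfree hdeg w hw
        omega
      calc 2 * G.edgeFinset.card = ∑ w, G.degree w := G.sum_degrees_eq_twice_card_edges.symm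
        _ = ∑ w ∈ (univ.filter fun w => G.degree w ≠ 0), G.degree w :=
            (Finset.sum_filter_ne_zero _).symm
        _ ≤ (univ.filter fun w => G.degree w ≠ 0).card * (ℓ - 1) :=
            Finset.sum_le_card_nsmul _ _ _ hdle
        _ = (ℓ - 1) * (univ.filter fun w => G.degree w ≠ 0).card := mul_comm _ _

end EG

/-- Erdős–Gallai: a graph on `n` vertices with no path of `ℓ` edges has at most
`(ℓ-1)n/2` edges. -/
theorem stmt_5 {V : Type*} [Fintype V] (ℓ : ℕ) (hℓ : 0 < ℓ) (G : SimpleGraph V)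
    (hfree : ∀ (u v : V) (p : G.Walk u v), p.IsPath → p.length ≠ ℓ) :
    2 * G.edgeSet.ncard ≤ (ℓ - 1) * Fintype.card V := by
  classical
  have h := EG.main' ℓ hℓ G.edgeFinset.card G rfl hfree
  have h2 : G.edgeSet.ncard = G.edgeFinset.card := by
    rw [← SimpleGraph.coe_edgeFinset, Set.ncard_coe_finset]
  rw [h2]
  refine h.trans (Nat.mul_le_mul_left _ ?_)
  exact le_trans (Finset.card_le_card (Finset.subset_univ _)) (by simp)
end

section
/- Let T be an r-uniform tight tree with ℓ edges, and let G be an r-uniform hypergraph on [n] containing no copy of T. Then |G| ≤ (ℓ−1)·|∂G|, where ∂G is the family of (r−1)-sets contained in some edge of G. In particular, |G| ≤ (ℓ−1)·C(n, r−1). -/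
/-- `G` contains a copy of `F`. -/
def HasCopy {α β : Type*} [DecidableEq α] [DecidableEq β]
    (F : Finset (Finset α)) (G : Finset (Finset β)) : Prop :=
  ∃ f : α → β, Set.InjOn f ↑(F.sup id) ∧ ∀ e ∈ F, e.image f ∈ G


open Finset
set_option maxHeartbeats 1000000


lemma embed_tree {α : Type*} [DecidableEq α] (r ℓ : ℕ) (hr : 0 < r) (hℓ : 0 < ℓ)
    (e : Fin ℓ → Finset α) (hunif : ∀ i, (e i).card = r)
    (htight : ∀ i : Fin ℓ, 0 < i.val → ∃ i' : Fin ℓ, i' < i ∧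
      (e i ∩ (Finset.univ.filter (fun j => j < i)).sup e).card = r - 1 ∧
      e i ∩ (Finset.univ.filter (fun j => j < i)).sup e ⊆ e i')
    (G' : Finset (Finset ℕ)) (hcardG : ∀ A ∈ G', A.card = r) (hne : G'.Nonempty)
    (hdeg : ∀ s ∈ G'.sup (fun f => f.powersetCard (r - 1)),
      ℓ ≤ (G'.filter (fun A => s ⊆ A)).card) :
    ∃ f : α → ℕ,
      Set.InjOn f ↑((Finset.univ.filter (fun j : Fin ℓ => j.val < ℓ)).sup e) ∧
      ∀ j : Fin ℓ, (e j).image f ∈ G' := by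
  set U : ℕ → Finset α := fun m => (Finset.univ.filter (fun j : Fin ℓ => j.val < m)).sup e
    with hU
  have hesub : ∀ (m : ℕ) (j : Fin ℓ), j.val < m → e j ⊆ U m := by
    intro m j hj
    exact Finset.le_sup (f := e) (Finset.mem_filter.mpr ⟨Finset.mem_univ j, hj⟩)
  have key : ∀ m : ℕ, 0 < m → m ≤ ℓ → ∃ f : α → ℕ,
      Set.InjOn f ↑(U m) ∧ (U m).card = r + m - 1 ∧
      ∀ j : Fin ℓ, j.val < m → (e j).image f ∈ G' := by
    intro m
    induction m with
    | zero => omega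
    | succ m ih =>
      intro _ hm1
      rcases Nat.eq_zero_or_pos m with rfl | hm0
      · -- base case m+1 = 1
        obtain ⟨A, hA⟩ := hne
        set i0 : Fin ℓ := ⟨0, hℓ⟩ with hi0
        have hU1 : U 1 = e i0 := by
          have hft : Finset.univ.filter (fun j : Fin ℓ => j.val < 1) = {i0} := by
            ext j
            simp only [Finset.mem_filter, Finset.mem_univ, true_and, Finset.mem_singleton]
            constructor
            · intro h; exact Fin.ext (show (j : ℕ) = 0 by omega)
            · rintro rfl; exact Nat.one_pos
          rw [show U 1 = (Finset.univ.filter (fun j : Fin ℓ => j.val < 1)).sup e from rfl,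
            hft, Finset.sup_singleton]
        have hcEq : (e i0).card = A.card := by rw [hunif, hcardG A hA]
        set φ := Finset.equivOfCardEq hcEq with hφ
        refine ⟨fun a => if h : a ∈ e i0 then (φ ⟨a, h⟩ : ℕ) else 0, ?_, ?_, ?_⟩
        · rw [hU1]
          intro x hx y hy hxy
          simp only [Finset.mem_coe] at hx hy
          dsimp only at hxy
          rw [dif_pos hx, dif_pos hy] at hxy
          have := φ.injective (Subtype.ext hxy)
          exact congrArg Subtype.val this
        · rw [hU1, hunif]; omega
        · intro j hj
          have hji : j = i0 := Fin.ext (show (j : ℕ) = 0 by omega)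
          subst hji
          have himg : (e i0).image (fun a => if h : a ∈ e i0 then (φ ⟨a, h⟩ : ℕ) else 0) = A := by
            ext b
            simp only [Finset.mem_image]
            constructor
            · rintro ⟨a, ha, rfl⟩
              rw [dif_pos ha]
              exact (φ ⟨a, ha⟩).2
            · intro hb
              refine ⟨(φ.symm ⟨b, hb⟩ : α), (φ.symm ⟨b, hb⟩).2, ?_⟩
              rw [dif_pos (φ.symm ⟨b, hb⟩).2]
              exact congrArg Subtype.val (φ.apply_symm_apply ⟨b, hb⟩)
          rw [himg]; exact hA
      · -- inductive step
        obtain ⟨f, hfin, hfcard, hfed⟩ := ih hm0 (by omega)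
        set i : Fin ℓ := ⟨m, by omega⟩ with hi
        obtain ⟨i', hi'lt, hscard, hssub⟩ := htight i hm0
        have hfilt : Finset.univ.filter (fun j : Fin ℓ => j < i) =
            Finset.univ.filter (fun j : Fin ℓ => j.val < m) := by
          apply Finset.filter_congr; intro j _; simp [Fin.lt_def, hi]
        rw [hfilt] at hscard hssub
        set s : Finset α := e i ∩ U m with hsdef
        have hsU : s ⊆ U m := Finset.inter_subset_right
        set t : Finset ℕ := s.image f with ht
        have htcard : t.card = r - 1 := by
          rw [ht, Finset.card_image_of_injOn (hfin.mono (by exact_mod_cast hsU)), hscard]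
        have hi'm : i'.val < m := hi'lt
        have hB : (e i').image f ∈ G' := hfed i' hi'm
        have htB : t ⊆ (e i').image f := Finset.image_subset_image hssub
        have htsh : t ∈ G'.sup (fun g => g.powersetCard (r - 1)) :=
          Finset.mem_sup.mpr ⟨(e i').image f, hB, Finset.mem_powersetCard.mpr ⟨htB, htcard⟩⟩
        have hdegt := hdeg t htsh
        set D := G'.filter (fun A => t ⊆ A) with hD
        -- each A in D is insert v t for a unique v
        have hone : ∀ A ∈ D, (A \ t).card = 1 := by
          intro A hAD
          rw [hD, Finset.mem_filter] at hAD
          have := Finset.card_sdiff_add_card_inter A t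
          rw [Finset.inter_eq_right.mpr hAD.2, hcardG A hAD.1, htcard] at this
          omega
        have hsingle : ∀ A ∈ D, A \ t = {(A \ t).sup id} := by
          intro A hAD
          obtain ⟨v, hv⟩ := Finset.card_eq_one.mp (hone A hAD)
          rw [hv, Finset.sup_singleton, id]
        -- find A whose extra vertex avoids the image of U m
        have himcard : ((U m).image f).card = r + m - 1 := by
          rw [Finset.card_image_of_injOn hfin, hfcard]
        have htsubim : t ⊆ (U m).image f := by
          rw [ht]; exact Finset.image_subset_image hsU
        have hFcard : (((U m).image f) \ t).card = m := by
          rw [Finset.card_sdiff_of_subset htsubim, himcard, htcard]; omega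
        have hexA : ∃ A ∈ D, (A \ t).sup id ∉ (U m).image f := by
          by_contra hcon
          push_neg at hcon
          have hmap : ∀ A ∈ D, (A \ t).sup id ∈ ((U m).image f) \ t := by
            intro A hAD
            rw [Finset.mem_sdiff]
            refine ⟨hcon A hAD, ?_⟩
            obtain ⟨v0, hv0⟩ := Finset.card_eq_one.mp (hone A hAD)
            have hmem : (A \ t).sup id ∈ A \ t := by
              rw [hv0, Finset.sup_singleton]
              exact Finset.mem_singleton_self _
            exact (Finset.mem_sdiff.mp hmem).2
          have hinj2 : ∀ A ∈ D, ∀ B ∈ D, (A \ t).sup id = (B \ t).sup id → A = B := by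
            intro A hAD B hBD hAB
            have hA2 : A = t ∪ (A \ t) := by
              rw [Finset.union_sdiff_of_subset (Finset.mem_filter.mp hAD).2]
            have hB2 : B = t ∪ (B \ t) := by
              rw [Finset.union_sdiff_of_subset (Finset.mem_filter.mp hBD).2]
            rw [hA2, hB2, hsingle A hAD, hsingle B hBD, hAB]
          have hcc : D.card ≤ (((U m).image f) \ t).card :=
            Finset.card_le_card_of_injOn _ hmap hinj2
          rw [hFcard] at hcc
          omega
        obtain ⟨A, hAD, hAv⟩ := hexA
        set v := (A \ t).sup id with hv
        -- the new vertex w of e i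
        have hwcard : (e i \ U m).card = 1 := by
          have := Finset.card_sdiff_add_card_inter (e i) (U m)
          rw [← hsdef, hscard, hunif] at this
          omega
        obtain ⟨w, hw⟩ := Finset.card_eq_one.mp hwcard
        have hwmem : w ∈ e i \ U m := by rw [hw]; exact Finset.mem_singleton_self w
        have hwU : w ∉ U m := (Finset.mem_sdiff.mp hwmem).2
        have hwe : w ∈ e i := (Finset.mem_sdiff.mp hwmem).1
        have hUsucc : U (m + 1) = insert w (U m) := by
          have hf2 : Finset.univ.filter (fun j : Fin ℓ => j.val < m + 1) =
              insert i (Finset.univ.filter (fun j : Fin ℓ => j.val < m)) := by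
            ext j
            simp only [Finset.mem_filter, Finset.mem_univ, true_and, Finset.mem_insert]
            constructor
            · intro h
              rcases Nat.lt_succ_iff_lt_or_eq.mp h with h' | h'
              · exact Or.inr h'
              · exact Or.inl (Fin.ext h')
            · rintro (rfl | h)
              · exact Nat.lt_succ_self m
              · omega
          rw [show U (m + 1) = (Finset.univ.filter (fun j : Fin ℓ => j.val < m + 1)).sup e from rfl,
            hf2, Finset.sup_insert]
          ext x
          simp only [Finset.sup_eq_union, Finset.mem_union, Finset.mem_insert]
          constructor
          · rintro (hx | hx)
            · by_cases hxU : x ∈ U m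
              · exact Or.inr hxU
              · left
                have hxs : x ∈ e i \ U m := Finset.mem_sdiff.mpr ⟨hx, hxU⟩
                rw [hw] at hxs
                exact Finset.mem_singleton.mp hxs
            · exact Or.inr hx
          · rintro (rfl | hx)
            · exact Or.inl hwe
            · exact Or.inr hx
        set f' := Function.update f w v with hf'
        have hf'eq : ∀ x ∈ U m, f' x = f x := by
          intro x hx
          have hxw : x ≠ w := by rintro rfl; exact hwU hx
          rw [hf', Function.update_of_ne hxw]
        have hf'w : f' w = v := by rw [hf', Function.update_self]
        have hfim : (U m).image f' = (U m).image f := Finset.image_congr (fun x hx => hf'eq x hx)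
        refine ⟨f', ?_, ?_, ?_⟩
        · rw [hUsucc]
          intro x hx y hy hxy
          simp only [Finset.coe_insert, Set.mem_insert_iff, Finset.mem_coe] at hx hy
          rcases hx with rfl | hx <;> rcases hy with rfl | hy
          · rfl
          · exfalso
            rw [hf'w, hf'eq y hy] at hxy
            exact hAv (hxy ▸ Finset.mem_image_of_mem f hy)
          · exfalso
            rw [hf'w, hf'eq x hx] at hxy
            exact hAv (hxy ▸ Finset.mem_image_of_mem f hx)
          · rw [hf'eq x hx, hf'eq y hy] at hxy
            exact hfin hx hy hxy
        · rw [hUsucc, Finset.card_insert_of_notMem hwU, hfcard]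
          omega
        · intro j hj
          rcases Nat.lt_succ_iff_lt_or_eq.mp hj with hj' | hj'
          · have : (e j).image f' = (e j).image f :=
              Finset.image_congr (fun x hx => hf'eq x (hesub m j hj' hx))
            rw [this]; exact hfed j hj'
          · have hji : j = i := Fin.ext hj'
            rw [hji]
            have hei : e i = insert w s := by
              ext x
              simp only [Finset.mem_insert]
              constructor
              · intro hx
                by_cases hxU : x ∈ U m
                · exact Or.inr (Finset.mem_inter.mpr ⟨hx, hxU⟩)
                · left
                  have hxs : x ∈ e i \ U m := Finset.mem_sdiff.mpr ⟨hx, hxU⟩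
                  rw [hw] at hxs
                  exact Finset.mem_singleton.mp hxs
              · rintro (rfl | hx)
                · exact hwe
                · exact Finset.inter_subset_left hx
            rw [hei, Finset.image_insert, hf'w]
            have hims : s.image f' = t := by
              rw [ht]; exact Finset.image_congr (fun x hx => hf'eq x (hsU hx))
            rw [hims]
            have hA2 : A = insert v t := by
              have h1 : A = t ∪ (A \ t) :=
                (Finset.union_sdiff_of_subset (Finset.mem_filter.mp hAD).2).symm
              rw [h1, hsingle A hAD, ← hv, Finset.union_comm, ← Finset.insert_eq]
            rw [← hA2]
            exact (Finset.mem_filter.mp hAD).1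
  obtain ⟨f, h1, _, h3⟩ := key ℓ hℓ le_rfl
  exact ⟨f, h1, fun j => h3 j j.isLt⟩


lemma exists_min_deg (r ℓ : ℕ) (hℓ : 0 < ℓ) :
    ∀ G : Finset (Finset ℕ), (ℓ - 1) * (G.sup (fun f => f.powersetCard (r - 1))).card < G.card →
      ∃ G', G' ⊆ G ∧ G'.Nonempty ∧
        ∀ s ∈ G'.sup (fun f => f.powersetCard (r - 1)), ℓ ≤ (G'.filter (fun A => s ⊆ A)).card := by
  intro G
  induction G using Finset.strongInduction with
  | _ G ih =>
    intro hlt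
    by_cases hall : ∀ s ∈ G.sup (fun f => f.powersetCard (r - 1)),
        ℓ ≤ (G.filter (fun A => s ⊆ A)).card
    · exact ⟨G, Finset.Subset.rfl, Finset.card_pos.mp (lt_of_le_of_lt (Nat.zero_le _) hlt), hall⟩
    · push_neg at hall
      obtain ⟨s, hs, hsdeg⟩ := hall
      obtain ⟨A₀, hA₀G, hA₀⟩ := Finset.mem_sup.mp hs
      rw [Finset.mem_powersetCard] at hA₀
      set G'' := G.filter (fun A => ¬ s ⊆ A) with hG''
      have hsubG : G'' ⊆ G := Finset.filter_subset _ _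
      have hssub : G'' ⊂ G := by
        refine ⟨hsubG, fun h => ?_⟩
        have := h hA₀G
        rw [hG'', Finset.mem_filter] at this
        exact this.2 hA₀.1
      -- shadow of G'' avoids s
      have hsh : G''.sup (fun f => f.powersetCard (r - 1)) ⊆
          (G.sup (fun f => f.powersetCard (r - 1))).erase s := by
        intro t ht
        obtain ⟨A, hAG'', hA⟩ := Finset.mem_sup.mp ht
        rw [Finset.mem_erase]
        constructor
        · rintro rfl
          rw [hG'', Finset.mem_filter] at hAG''
          exact hAG''.2 (Finset.mem_powersetCard.mp hA).1
        · exact Finset.mem_sup.mpr ⟨A, hsubG hAG'', hA⟩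
      have hcard2 : (G''.sup (fun f => f.powersetCard (r - 1))).card ≤
          (G.sup (fun f => f.powersetCard (r - 1))).card - 1 := by
        calc _ ≤ ((G.sup (fun f => f.powersetCard (r - 1))).erase s).card :=
              Finset.card_le_card hsh
          _ = _ := Finset.card_erase_of_mem hs
      have ha : 1 ≤ (G.sup (fun f => f.powersetCard (r - 1))).card :=
        Finset.card_pos.mpr ⟨s, hs⟩
      have hsplit : (G.filter (fun A => s ⊆ A)).card + G''.card = G.card := by
        rw [hG'']; exact Finset.card_filter_add_card_filter_not _
      have hlt'' : (ℓ - 1) * (G''.sup (fun f => f.powersetCard (r - 1))).card < G''.card := by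
        set a := (G.sup (fun f => f.powersetCard (r - 1))).card
        set b := (G''.sup (fun f => f.powersetCard (r - 1))).card
        set d := (G.filter (fun A => s ⊆ A)).card
        have h1 : (ℓ - 1) * b ≤ (ℓ - 1) * (a - 1) := Nat.mul_le_mul_left _ hcard2
        have h2 : (ℓ - 1) * (a - 1) + (ℓ - 1) = (ℓ - 1) * a := by
          rw [← Nat.mul_succ]; congr 1; omega
        omega
      obtain ⟨G', h1, h2, h3⟩ := ih G'' hssub hlt''
      exact ⟨G', h1.trans hsubG, h2, h3⟩

/-- An `r`-uniform tight tree `T` with edges `e 0, …, e (ℓ-1)`: for each `i > 0`,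
the intersection of `e i` with the union of earlier edges is an `(r-1)`-set
contained in some earlier edge. If `G ⊆ C([n],r)` contains no copy of `T`, then
`|G| ≤ (ℓ-1)|∂G|` and in particular `|G| ≤ (ℓ-1)·C(n,r-1)`. -/
theorem stmt_8 {α : Type*} [DecidableEq α] (r ℓ n : ℕ) (hr : 0 < r) (hℓ : 0 < ℓ)
    (e : Fin ℓ → Finset α) (hinj : Function.Injective e)
    (hunif : ∀ i, (e i).card = r)
    (htight : ∀ i : Fin ℓ, 0 < i.val → ∃ i' : Fin ℓ, i' < i ∧
      (e i ∩ (Finset.univ.filter (fun j => j < i)).sup e).card = r - 1 ∧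
      e i ∩ (Finset.univ.filter (fun j => j < i)).sup e ⊆ e i')
    (G : Finset (Finset ℕ)) (hG : G ⊆ (Finset.range n).powersetCard r)
    (hfree : ¬ HasCopy (Finset.image e Finset.univ) G) :
    G.card ≤ (ℓ - 1) * (G.sup (fun f => f.powersetCard (r - 1))).card ∧
      G.card ≤ (ℓ - 1) * Nat.choose n (r - 1) := by
  classical
  have h1 : G.card ≤ (ℓ - 1) * (G.sup (fun f => f.powersetCard (r - 1))).card := by
    by_contra hc
    push_neg at hc
    obtain ⟨G', hG'G, hne, hdeg⟩ := exists_min_deg r ℓ hℓ G hc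
    have hcardG : ∀ A ∈ G', A.card = r := by
      intro A hA
      exact (Finset.mem_powersetCard.mp (hG (hG'G hA))).2
    obtain ⟨f, hfin, hfed⟩ := embed_tree r ℓ hr hℓ e hunif htight G' hcardG hne hdeg
    apply hfree
    refine ⟨f, ?_, ?_⟩
    · have hsupeq : (Finset.image e Finset.univ).sup id = 
          (Finset.univ.filter (fun j : Fin ℓ => j.val < ℓ)).sup e := by
        rw [Finset.sup_image]
        congr 1
        rw [Finset.filter_true_of_mem (fun j _ => j.isLt)]
      rw [hsupeq]
      exact hfin
    · intro ed hed
      obtain ⟨j, _, rfl⟩ := Finset.mem_image.mp hed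
      exact hG'G (hfed j)
  refine ⟨h1, h1.trans (Nat.mul_le_mul_left _ ?_)⟩
  have hsub : G.sup (fun f => f.powersetCard (r - 1)) ⊆ (Finset.range n).powersetCard (r - 1) := by
    intro s hs
    obtain ⟨A, hAG, hA⟩ := Finset.mem_sup.mp hs
    rw [Finset.mem_powersetCard] at hA ⊢
    exact ⟨hA.1.trans (Finset.mem_powersetCard.mp (hG hAG)).1, hA.2⟩
  calc (G.sup (fun f => f.powersetCard (r - 1))).card
      ≤ ((Finset.range n).powersetCard (r - 1)).card := Finset.card_le_card hsub
    _ = Nat.choose n (r - 1) := by rw [Finset.card_powersetCard, Finset.card_range]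
end

section
/- Let s, t be positive integers and T a tree with bipartition classes of sizes s and t. If H_0 is a bipartite graph with parts A, B and more than (t−1)|A| + (s−1)|B| edges, then H_0 contains a copy of T with the s-class embedded in A and the t-class embedded in B. -/
open SimpleGraph

lemma degreeSub {α β : Type*} [DecidableEq α] [DecidableEq β] (s t : ℕ) :
    ∀ (E : Finset (α × β)),
      (t-1) * (E.image Prod.fst).card + (s-1) * (E.image Prod.snd).card < E.card →
      ∃ E' : Finset (α × β), E' ⊆ E ∧ E'.Nonempty ∧
        ∀ p ∈ E', t ≤ (E'.filter (fun q => q.1 = p.1)).card ∧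
                  s ≤ (E'.filter (fun q => q.2 = p.2)).card := by
  intro E
  induction E using Finset.strongInductionOn with
  | _ E ih =>
    intro hlt
    by_cases hgood : ∀ p ∈ E, t ≤ (E.filter (fun q => q.1 = p.1)).card ∧
        s ≤ (E.filter (fun q => q.2 = p.2)).card
    · refine ⟨E, subset_rfl, ?_, hgood⟩
      rw [← Finset.card_pos]; omega
    · push_neg at hgood
      obtain ⟨p, hp, hbad⟩ := hgood
      rcases lt_or_ge (E.filter (fun q => q.1 = p.1)).card t with hdt | hdt
      · -- remove all edges at p.1
        set E' := E.filter (fun q => ¬ q.1 = p.1) with hE'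
        have hsub : E' ⊆ E := Finset.filter_subset _ _
        have hssub : E' ⊂ E := by
          refine Finset.ssubset_iff_of_subset hsub |>.mpr ⟨p, hp, ?_⟩
          simp [hE']
        have hcardsplit : (E.filter (fun q => q.1 = p.1)).card + E'.card = E.card := by
          rw [hE']; exact Finset.card_filter_add_card_filter_not _
        have hdeg1 : 1 ≤ (E.filter (fun q => q.1 = p.1)).card := by
          exact Finset.card_pos.mpr ⟨p, by simp [hp]⟩
        have himg1 : (E'.image Prod.fst) ⊆ (E.image Prod.fst).erase p.1 := by
          intro a ha
          simp only [Finset.mem_image, hE', Finset.mem_filter] at ha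
          obtain ⟨q, ⟨hq, hq1⟩, rfl⟩ := ha
          exact Finset.mem_erase.mpr ⟨hq1, Finset.mem_image_of_mem _ hq⟩
        have himg1' : (E'.image Prod.fst).card + 1 ≤ (E.image Prod.fst).card := by
          have := Finset.card_le_card himg1
          have h2 : ((E.image Prod.fst).erase p.1).card + 1 = (E.image Prod.fst).card :=
            Finset.card_erase_add_one (Finset.mem_image_of_mem _ hp)
          omega
        have himg2 : (E'.image Prod.snd).card ≤ (E.image Prod.snd).card :=
          Finset.card_le_card (Finset.image_subset_image hsub)
        have hlt' : (t-1) * (E'.image Prod.fst).card + (s-1) * (E'.image Prod.snd).card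
            < E'.card := by
          have h1 : (t-1) * (E'.image Prod.fst).card + (t-1)
              ≤ (t-1) * (E.image Prod.fst).card := by
            calc (t-1) * (E'.image Prod.fst).card + (t-1)
                = (t-1) * ((E'.image Prod.fst).card + 1) := by ring
              _ ≤ (t-1) * (E.image Prod.fst).card := Nat.mul_le_mul_left _ himg1'
          have h2 : (s-1) * (E'.image Prod.snd).card ≤ (s-1) * (E.image Prod.snd).card :=
            Nat.mul_le_mul_left _ himg2
          omega
        obtain ⟨E'', h1, h2, h3⟩ := ih E' hssub hlt'
        exact ⟨E'', h1.trans hsub, h2, h3⟩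
      · -- then the snd-degree is bad
        have hds : (E.filter (fun q => q.2 = p.2)).card < s := by
          rcases hbad hdt with h; omega
        set E' := E.filter (fun q => ¬ q.2 = p.2) with hE'
        have hsub : E' ⊆ E := Finset.filter_subset _ _
        have hssub : E' ⊂ E := by
          refine Finset.ssubset_iff_of_subset hsub |>.mpr ⟨p, hp, ?_⟩
          simp [hE']
        have hcardsplit : (E.filter (fun q => q.2 = p.2)).card + E'.card = E.card := by
          rw [hE']; exact Finset.card_filter_add_card_filter_not _
        have hdeg1 : 1 ≤ (E.filter (fun q => q.2 = p.2)).card := by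
          exact Finset.card_pos.mpr ⟨p, by simp [hp]⟩
        have himg1 : (E'.image Prod.snd) ⊆ (E.image Prod.snd).erase p.2 := by
          intro a ha
          simp only [Finset.mem_image, hE', Finset.mem_filter] at ha
          obtain ⟨q, ⟨hq, hq1⟩, rfl⟩ := ha
          exact Finset.mem_erase.mpr ⟨hq1, Finset.mem_image_of_mem _ hq⟩
        have himg1' : (E'.image Prod.snd).card + 1 ≤ (E.image Prod.snd).card := by
          have := Finset.card_le_card himg1
          have h2 : ((E.image Prod.snd).erase p.2).card + 1 = (E.image Prod.snd).card :=
            Finset.card_erase_add_one (Finset.mem_image_of_mem _ hp)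
          omega
        have himg2 : (E'.image Prod.fst).card ≤ (E.image Prod.fst).card :=
          Finset.card_le_card (Finset.image_subset_image hsub)
        have hlt' : (t-1) * (E'.image Prod.fst).card + (s-1) * (E'.image Prod.snd).card
            < E'.card := by
          have h1 : (s-1) * (E'.image Prod.snd).card + (s-1)
              ≤ (s-1) * (E.image Prod.snd).card := by
            calc (s-1) * (E'.image Prod.snd).card + (s-1)
                = (s-1) * ((E'.image Prod.snd).card + 1) := by ring
              _ ≤ (s-1) * (E.image Prod.snd).card := Nat.mul_le_mul_left _ himg1'
          have h2 : (t-1) * (E'.image Prod.fst).card ≤ (t-1) * (E.image Prod.fst).card :=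
            Nat.mul_le_mul_left _ himg2
          omega
        obtain ⟨E'', h1, h2, h3⟩ := ih E' hssub hlt'
        exact ⟨E'', h1.trans hsub, h2, h3⟩

lemma side_flip {s t : ℕ} {T : SimpleGraph (Fin s ⊕ Fin t)}
    (hb1 : ∀ i j : Fin s, ¬ T.Adj (Sum.inl i) (Sum.inl j))
    (hb2 : ∀ i j : Fin t, ¬ T.Adj (Sum.inr i) (Sum.inr j))
    {x y : Fin s ⊕ Fin t} (h : T.Adj x y) : x.isLeft = !y.isLeft := by
  rcases x with i | i <;> rcases y with j | j
  · exact absurd h (hb1 i j)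
  · simp
  · simp
  · exact absurd h (hb2 i j)

lemma walk_parity {s t : ℕ} {T : SimpleGraph (Fin s ⊕ Fin t)}
    (hb1 : ∀ i j : Fin s, ¬ T.Adj (Sum.inl i) (Sum.inl j))
    (hb2 : ∀ i j : Fin t, ¬ T.Adj (Sum.inr i) (Sum.inr j))
    {u v : Fin s ⊕ Fin t} (p : T.Walk u v) :
    (u.isLeft = v.isLeft ↔ Even p.length) := by
  induction p with
  | nil => simp
  | @cons u w v h q ih =>
    have hf := side_flip hb1 hb2 h
    rw [Walk.length_cons, Nat.even_add_one, ← ih, hf]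
    cases w.isLeft <;> cases v.isLeft <;> simp

lemma tree_parent {s t : ℕ} {T : SimpleGraph (Fin s ⊕ Fin t)} (hT : T.IsTree)
    (r v : Fin s ⊕ Fin t) (hv : v ≠ r) :
    ∃! u, T.Adj u v ∧ T.dist r u + 1 = T.dist r v := by
  classical
  have hc := hT.isConnected
  have hd : 0 < T.dist r v := hc.pos_dist_of_ne (Ne.symm hv)
  have hex : ∃ u, T.Adj u v ∧ T.dist r u + 1 = T.dist r v := by
    obtain ⟨p, hp, hl⟩ := hc.exists_path_of_dist v r
    have hcomm : T.dist v r = T.dist r v := SimpleGraph.dist_comm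
    cases p with
    | nil => exact absurd rfl hv
    | @cons _ u' _ h q =>
      refine ⟨u', h.symm, ?_⟩
      have h1 : T.dist r u' ≤ q.reverse.length := SimpleGraph.dist_le _
      rw [Walk.length_reverse] at h1
      rw [Walk.length_cons] at hl
      have h3 : T.dist r v ≤ T.dist r u' + 1 := by
        have h5 := hc.dist_triangle (u := r) (v := u') (w := v)
        have h4 : T.dist u' v ≤ 1 := SimpleGraph.dist_le h.symm.toWalk
        omega
      omega
  obtain ⟨u, hu⟩ := hex
  refine ⟨u, hu, fun w hw => ?_⟩
  obtain ⟨q1, hq1, hl1⟩ := hc.exists_path_of_dist r w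
  obtain ⟨q2, hq2, hl2⟩ := hc.exists_path_of_dist r u
  have hv1 : v ∉ q1.support := by
    intro hmem
    have h1 := SimpleGraph.dist_le (q1.takeUntil v hmem)
    have h2 := Walk.length_takeUntil_le q1 hmem
    omega
  have hv2 : v ∉ q2.support := by
    intro hmem
    have h1 := SimpleGraph.dist_le (q2.takeUntil v hmem)
    have h2 := Walk.length_takeUntil_le q2 hmem
    omega
  have hP1 : (q1.concat hw.1).IsPath := by
    rw [← Walk.isPath_reverse_iff, Walk.reverse_concat]
    rw [Walk.cons_isPath_iff]
    refine ⟨(Walk.isPath_reverse_iff q1).mpr hq1, ?_⟩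
    rw [Walk.support_reverse, List.mem_reverse]; exact hv1
  have hP2 : (q2.concat hu.1).IsPath := by
    rw [← Walk.isPath_reverse_iff, Walk.reverse_concat]
    rw [Walk.cons_isPath_iff]
    refine ⟨(Walk.isPath_reverse_iff q2).mpr hq2, ?_⟩
    rw [Walk.support_reverse, List.mem_reverse]; exact hv2
  have heq : q1.concat hw.1 = q2.concat hu.1 := by
    have := hT.IsAcyclic.path_unique ⟨q1.concat hw.1, hP1⟩ ⟨q2.concat hu.1, hP2⟩
    exact congrArg Subtype.val this
  obtain ⟨hwu, -⟩ := Walk.concat_inj heq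
  exact hwu

lemma edge_dist {s t : ℕ} {T : SimpleGraph (Fin s ⊕ Fin t)} (hT : T.IsTree)
    (hb1 : ∀ i j : Fin s, ¬ T.Adj (Sum.inl i) (Sum.inl j))
    (hb2 : ∀ i j : Fin t, ¬ T.Adj (Sum.inr i) (Sum.inr j))
    (r u v : Fin s ⊕ Fin t) (h : T.Adj u v) :
    T.dist r u + 1 = T.dist r v ∨ T.dist r v + 1 = T.dist r u := by
  have hc := hT.isConnected
  obtain ⟨pu, _, hlu⟩ := hc.exists_path_of_dist r u
  obtain ⟨pv, _, hlv⟩ := hc.exists_path_of_dist r v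
  have h1 := walk_parity hb1 hb2 pu
  have h2 := walk_parity hb1 hb2 pv
  have hf := side_flip hb1 hb2 h
  have htri1 : T.dist r v ≤ T.dist r u + 1 := by
    have h5 := hc.dist_triangle (u := r) (v := u) (w := v)
    have h4 : T.dist u v ≤ 1 := SimpleGraph.dist_le h.toWalk
    omega
  have htri2 : T.dist r u ≤ T.dist r v + 1 := by
    have h5 := hc.dist_triangle (u := r) (v := v) (w := u)
    have h4 : T.dist v u ≤ 1 := SimpleGraph.dist_le h.symm.toWalk
    omega
  have hne : ¬ (Even pu.length ↔ Even pv.length) := by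
    rw [← h1, ← h2, hf]
    cases (Sum.isLeft r) <;> cases v.isLeft <;> simp
  rw [Nat.even_iff, Nat.even_iff] at hne
  rw [hlu] at *
  rw [hlv] at *
  omega

/-- If a bipartite graph with parts `A`, `B` has more than
`(t-1)|A| + (s-1)|B|` edges, then it contains every tree with bipartition
classes of sizes `s` and `t`, with the `s`-class embedded in `A` and the
`t`-class embedded in `B`. -/
theorem stmt_11 {α β : Type*} [DecidableEq α] [DecidableEq β] (s t : ℕ)
    (hs : 0 < s) (ht : 0 < t) (A : Finset α) (B : Finset β)
    (E : Finset (α × β)) (hE : E ⊆ A ×ˢ B)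
    (hcard : (t - 1) * A.card + (s - 1) * B.card < E.card)
    (T : SimpleGraph (Fin s ⊕ Fin t)) (hT : T.IsTree)
    (hb1 : ∀ i j : Fin s, ¬ T.Adj (Sum.inl i) (Sum.inl j))
    (hb2 : ∀ i j : Fin t, ¬ T.Adj (Sum.inr i) (Sum.inr j)) :
    ∃ (fU : Fin s → α) (fV : Fin t → β),
      Function.Injective fU ∧ Function.Injective fV ∧
      (∀ i, fU i ∈ A) ∧ (∀ j, fV j ∈ B) ∧
      ∀ i j, T.Adj (Sum.inl i) (Sum.inr j) → (fU i, fV j) ∈ E := by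
  classical
  -- Step 1: pass to a subgraph with min degrees
  have himgA : E.image Prod.fst ⊆ A := by
    intro a ha; obtain ⟨q, hq, rfl⟩ := Finset.mem_image.mp ha
    exact (Finset.mem_product.mp (hE hq)).1
  have himgB : E.image Prod.snd ⊆ B := by
    intro b hb; obtain ⟨q, hq, rfl⟩ := Finset.mem_image.mp hb
    exact (Finset.mem_product.mp (hE hq)).2
  have hlt : (t-1) * (E.image Prod.fst).card + (s-1) * (E.image Prod.snd).card < E.card := by
    have h1 := Finset.card_le_card himgA
    have h2 := Finset.card_le_card himgB
    have := Nat.mul_le_mul_left (t-1) h1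
    have := Nat.mul_le_mul_left (s-1) h2
    omega
  obtain ⟨E', hE'E, ⟨e₀, he₀⟩, hdeg⟩ := degreeSub s t E hlt
  set a₀ := e₀.1 with ha₀
  set b₀ := e₀.2 with hb₀
  set r : Fin s ⊕ Fin t := Sum.inl ⟨0, hs⟩ with hr
  -- parent function
  have hpar' : ∀ v : Fin s ⊕ Fin t, ∃ u, v ≠ r →
      T.Adj u v ∧ T.dist r u + 1 = T.dist r v ∧
      ∀ w, T.Adj w v → T.dist r w + 1 = T.dist r v → w = u := by
    intro v
    by_cases hv : v = r
    · exact ⟨r, fun h => absurd hv h⟩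
    · obtain ⟨u, ⟨h1, h2⟩, hu⟩ := tree_parent hT r v hv
      exact ⟨u, fun _ => ⟨h1, h2, fun w hw1 hw2 => hu w ⟨hw1, hw2⟩⟩⟩
  choose parent hparent using hpar'
  have hedge : ∀ u v, T.Adj u v →
      (v ≠ r ∧ parent v = u) ∨ (u ≠ r ∧ parent u = v) := by
    intro u v h
    rcases edge_dist hT hb1 hb2 r u v h with hd | hd
    · left
      have hvr : v ≠ r := by
        intro hveq; rw [hveq, SimpleGraph.dist_self] at hd; omega
      exact ⟨hvr, ((hparent v hvr).2.2 u h hd).symm⟩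
    · right
      have hur : u ≠ r := by
        intro hueq; rw [hueq, SimpleGraph.dist_self] at hd; omega
      exact ⟨hur, ((hparent u hur).2.2 v h.symm hd).symm⟩
  -- main induction: extend a partial embedding one vertex at a time
  have main : ∀ (k : ℕ) (S : Finset (Fin s ⊕ Fin t)) (f : (Fin s ⊕ Fin t) → α ⊕ β),
      (Finset.univ \ S).card = k → r ∈ S →
      (∀ v ∈ S, v ≠ r → parent v ∈ S) →
      (∀ i : Fin s, Sum.inl i ∈ S → ∃ a ∈ E'.image Prod.fst, f (Sum.inl i) = Sum.inl a) →
      (∀ j : Fin t, Sum.inr j ∈ S → ∃ b ∈ E'.image Prod.snd, f (Sum.inr j) = Sum.inr b) →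
      (∀ u ∈ S, ∀ w ∈ S, f u = f w → u = w) →
      (∀ i j, Sum.inl i ∈ S → Sum.inr j ∈ S → T.Adj (Sum.inl i) (Sum.inr j) →
        ∃ a b, f (Sum.inl i) = Sum.inl a ∧ f (Sum.inr j) = Sum.inr b ∧ (a, b) ∈ E') →
      ∃ g : (Fin s ⊕ Fin t) → α ⊕ β,
        (∀ i : Fin s, ∃ a ∈ E'.image Prod.fst, g (Sum.inl i) = Sum.inl a) ∧
        (∀ j : Fin t, ∃ b ∈ E'.image Prod.snd, g (Sum.inr j) = Sum.inr b) ∧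
        (∀ u w, g u = g w → u = w) ∧
        (∀ i j, T.Adj (Sum.inl i) (Sum.inr j) →
          ∃ a b, g (Sum.inl i) = Sum.inl a ∧ g (Sum.inr j) = Sum.inr b ∧ (a, b) ∈ E') := by
    intro k
    induction k with
    | zero =>
      intro S f hc0 _ _ hsideA hsideB hinj hedges
      have hSuniv : ∀ v : Fin s ⊕ Fin t, v ∈ S := by
        have := Finset.sdiff_eq_empty_iff_subset.mp (Finset.card_eq_zero.mp hc0)
        intro v; exact this (Finset.mem_univ v)
      exact ⟨f, fun i => hsideA i (hSuniv _), fun j => hsideB j (hSuniv _),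
        fun u w h => hinj u (hSuniv u) w (hSuniv w) h,
        fun i j hadj => hedges i j (hSuniv _) (hSuniv _) hadj⟩
    | succ k ih =>
      intro S f hck hrS hclosed hsideA hsideB hinj hedges
      have hne : (Finset.univ \ S).Nonempty := by
        rw [← Finset.card_pos]; omega
      obtain ⟨v, hvmem, hvmin⟩ := Finset.exists_min_image (Finset.univ \ S) (T.dist r) hne
      have hvS : v ∉ S := (Finset.mem_sdiff.mp hvmem).2
      have hvr : v ≠ r := fun h => hvS (h ▸ hrS)
      obtain ⟨hpadj, hpdist, hpuniq⟩ := hparent v hvr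
      have hpS : parent v ∈ S := by
        by_contra hns
        have h1 := hvmin (parent v) (Finset.mem_sdiff.mpr ⟨Finset.mem_univ _, hns⟩)
        omega
      have hcard' : (Finset.univ \ insert v S).card = k := by
        rw [Finset.sdiff_insert, Finset.card_erase_of_mem hvmem, hck]
        omega
      have hclosed' : ∀ w ∈ insert v S, w ≠ r → parent w ∈ insert v S := by
        intro w hw hwr
        rcases Finset.mem_insert.mp hw with rfl | hw
        · exact Finset.mem_insert_of_mem hpS
        · exact Finset.mem_insert_of_mem (hclosed w hw hwr)
      rcases v with i | j
      · -- v = Sum.inl i : embed into α side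
        rcases hpcase : parent (Sum.inl i) with i' | j
        · exfalso
          rw [hpcase] at hpadj; exact hb1 i' i hpadj
        · -- parent v = Sum.inr j ∈ S
          have hjS : Sum.inr j ∈ S := hpcase ▸ hpS
          obtain ⟨b, hbmem, hfb⟩ := hsideB j hjS
          obtain ⟨q0, hq0, hq0b⟩ := Finset.mem_image.mp hbmem
          have hdegb : s ≤ (E'.filter (fun q => q.2 = b)).card := by
            have := (hdeg q0 hq0).2
            rwa [hq0b] at this
          set N := (E'.filter (fun q => q.2 = b)).image Prod.fst with hN
          have hNcard : s ≤ N.card := by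
            rw [hN, Finset.card_image_of_injOn]
            · exact hdegb
            · intro q1 hq1 q2 hq2 hq12
              have h1 := (Finset.mem_filter.mp hq1).2
              have h2 := (Finset.mem_filter.mp hq2).2
              exact Prod.ext hq12 (h1.trans h2.symm)
          set U := (Finset.univ.filter (fun i' : Fin s => Sum.inl i' ∈ S)).image
            (fun i' => Sum.elim id (fun _ => a₀) (f (Sum.inl i'))) with hU
          have hUcard : U.card ≤ s - 1 := by
            have hsub : (Finset.univ.filter (fun i' : Fin s => Sum.inl i' ∈ S)) ⊆
                Finset.univ.erase i := by
              intro x hx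
              refine Finset.mem_erase.mpr ⟨?_, Finset.mem_univ _⟩
              intro hxi
              exact hvS (hxi ▸ (Finset.mem_filter.mp hx).2)
            calc U.card ≤ _ := Finset.card_image_le
              _ ≤ (Finset.univ.erase i).card := Finset.card_le_card hsub
              _ = s - 1 := by
                rw [Finset.card_erase_of_mem (Finset.mem_univ _), Finset.card_univ,
                  Fintype.card_fin]
          have hfresh : ∃ a ∈ N, a ∉ U := by
            by_contra hcon
            push_neg at hcon
            have := Finset.card_le_card hcon
            omega
          obtain ⟨a, haN, haU⟩ := hfresh
          have habE' : (a, b) ∈ E' := by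
            obtain ⟨q, hq, hqa⟩ := Finset.mem_image.mp haN
            have hq' := Finset.mem_filter.mp hq
            have : q = (a, b) := Prod.ext hqa hq'.2
            exact this ▸ hq'.1
          set f' := Function.update f (Sum.inl i) (Sum.inl a) with hf'
          have hfeq : ∀ w ∈ S, f' w = f w := by
            intro w hw
            rw [hf', Function.update_of_ne]
            intro hwi; rw [hwi] at hw; exact hvS hw
          have hfi : f' (Sum.inl i) = Sum.inl a := by
            rw [hf', Function.update_self]
          apply ih (insert (Sum.inl i) S) f' hcard' (Finset.mem_insert_of_mem hrS) hclosed'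
          · -- sideA
            intro i'' hi''
            rcases Finset.mem_insert.mp hi'' with heq | hmem
            · obtain rfl : i'' = i := by simpa using heq
              exact ⟨a, Finset.mem_image_of_mem _ habE', hfi⟩
            · obtain ⟨a2, ha2, hfa2⟩ := hsideA i'' hmem
              exact ⟨a2, ha2, (hfeq _ hmem).trans hfa2⟩
          · -- sideB
            intro j'' hj''
            have hmem : Sum.inr j'' ∈ S := by
              rcases Finset.mem_insert.mp hj'' with heq | hmem
              · exact absurd heq (by simp)
              · exact hmem
            obtain ⟨b2, hb2, hfb2⟩ := hsideB j'' hmem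
            exact ⟨b2, hb2, (hfeq _ hmem).trans hfb2⟩
          · -- injectivity
            intro u hu w hw huw
            rcases Finset.mem_insert.mp hu with rfl | hu' <;>
              rcases Finset.mem_insert.mp hw with h' | hw'
            · rw [h']
            · exfalso
              rw [hfi, hfeq _ hw'] at huw
              rcases w with i2 | j2
              · obtain ⟨a2, ha2, hfa2⟩ := hsideA i2 hw'
                rw [hfa2] at huw
                obtain rfl : a = a2 := by simpa using huw
                apply haU
                rw [hU]
                refine Finset.mem_image.mpr ⟨i2, Finset.mem_filter.mpr
                  ⟨Finset.mem_univ _, hw'⟩, ?_⟩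
                rw [hfa2]; rfl
              · obtain ⟨b2, hb2, hfb2⟩ := hsideB j2 hw'
                rw [hfb2] at huw
                simp at huw
            · exfalso
              rw [h', hfi, hfeq _ hu'] at huw
              rcases u with i2 | j2
              · obtain ⟨a2, ha2, hfa2⟩ := hsideA i2 hu'
                rw [hfa2] at huw
                obtain rfl : a2 = a := by simpa using huw
                apply haU
                rw [hU]
                refine Finset.mem_image.mpr ⟨i2, Finset.mem_filter.mpr
                  ⟨Finset.mem_univ _, hu'⟩, ?_⟩
                rw [hfa2]; rfl
              · obtain ⟨b2, hb2, hfb2⟩ := hsideB j2 hu'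
                rw [hfb2] at huw
                simp at huw
            · rw [hfeq _ hu', hfeq _ hw'] at huw
              exact hinj u hu' w hw' huw
          · -- edges
            intro i'' j'' hi'' hj'' hadj
            have hj''S : Sum.inr j'' ∈ S := by
              rcases Finset.mem_insert.mp hj'' with heq | hmem
              · exact absurd heq (by simp)
              · exact hmem
            rcases Finset.mem_insert.mp hi'' with heq | hmem
            · obtain rfl : i'' = i := by simpa using heq
              have hpj : parent (Sum.inl i'') = Sum.inr j'' := by
                rcases hedge (Sum.inl i'') (Sum.inr j'') hadj with ⟨hne', h'⟩ | ⟨hne', h'⟩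
                · exfalso
                  have := hclosed _ hj''S hne'
                  rw [h'] at this
                  exact hvS this
                · exact h'
              have hjj : j'' = j := by
                rw [hpj] at hpcase
                simpa using hpcase
              subst hjj
              exact ⟨a, b, hfi, (hfeq _ hjS).trans hfb, habE'⟩
            · obtain ⟨a2, b2, h1, h2, h3⟩ := hedges i'' j'' hmem hj''S hadj
              exact ⟨a2, b2, (hfeq _ hmem).trans h1, (hfeq _ hj''S).trans h2, h3⟩
      · -- v = Sum.inr j : embed into β side
        rcases hpcase : parent (Sum.inr j) with i | j'
        swap
        · exfalso
          rw [hpcase] at hpadj; exact hb2 j' j hpadj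
        · have hiS : Sum.inl i ∈ S := hpcase ▸ hpS
          obtain ⟨a, hamem, hfa⟩ := hsideA i hiS
          obtain ⟨q0, hq0, hq0a⟩ := Finset.mem_image.mp hamem
          have hdega : t ≤ (E'.filter (fun q => q.1 = a)).card := by
            have := (hdeg q0 hq0).1
            rwa [hq0a] at this
          set N := (E'.filter (fun q => q.1 = a)).image Prod.snd with hN
          have hNcard : t ≤ N.card := by
            rw [hN, Finset.card_image_of_injOn]
            · exact hdega
            · intro q1 hq1 q2 hq2 hq12
              have h1 := (Finset.mem_filter.mp hq1).2
              have h2 := (Finset.mem_filter.mp hq2).2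
              exact Prod.ext (h1.trans h2.symm) hq12
          set U := (Finset.univ.filter (fun j' : Fin t => Sum.inr j' ∈ S)).image
            (fun j' => Sum.elim (fun _ => b₀) id (f (Sum.inr j'))) with hU
          have hUcard : U.card ≤ t - 1 := by
            have hsub : (Finset.univ.filter (fun j' : Fin t => Sum.inr j' ∈ S)) ⊆
                Finset.univ.erase j := by
              intro x hx
              refine Finset.mem_erase.mpr ⟨?_, Finset.mem_univ _⟩
              intro hxj
              exact hvS (hxj ▸ (Finset.mem_filter.mp hx).2)
            calc U.card ≤ _ := Finset.card_image_le
              _ ≤ (Finset.univ.erase j).card := Finset.card_le_card hsub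
              _ = t - 1 := by
                rw [Finset.card_erase_of_mem (Finset.mem_univ _), Finset.card_univ,
                  Fintype.card_fin]
          have hfresh : ∃ b ∈ N, b ∉ U := by
            by_contra hcon
            push_neg at hcon
            have := Finset.card_le_card hcon
            omega
          obtain ⟨b, hbN, hbU⟩ := hfresh
          have habE' : (a, b) ∈ E' := by
            obtain ⟨q, hq, hqb⟩ := Finset.mem_image.mp hbN
            have hq' := Finset.mem_filter.mp hq
            have : q = (a, b) := Prod.ext hq'.2 hqb
            exact this ▸ hq'.1
          set f' := Function.update f (Sum.inr j) (Sum.inr b) with hf'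
          have hfeq : ∀ w ∈ S, f' w = f w := by
            intro w hw
            rw [hf', Function.update_of_ne]
            intro hwj; rw [hwj] at hw; exact hvS hw
          have hfj : f' (Sum.inr j) = Sum.inr b := by
            rw [hf', Function.update_self]
          apply ih (insert (Sum.inr j) S) f' hcard' (Finset.mem_insert_of_mem hrS) hclosed'
          · -- sideA
            intro i'' hi''
            have hmem : Sum.inl i'' ∈ S := by
              rcases Finset.mem_insert.mp hi'' with heq | hmem
              · exact absurd heq (by simp)
              · exact hmem
            obtain ⟨a2, ha2, hfa2⟩ := hsideA i'' hmem
            exact ⟨a2, ha2, (hfeq _ hmem).trans hfa2⟩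
          · -- sideB
            intro j'' hj''
            rcases Finset.mem_insert.mp hj'' with heq | hmem
            · obtain rfl : j'' = j := by simpa using heq
              exact ⟨b, Finset.mem_image_of_mem _ habE', hfj⟩
            · obtain ⟨b2, hb2, hfb2⟩ := hsideB j'' hmem
              exact ⟨b2, hb2, (hfeq _ hmem).trans hfb2⟩
          · -- injectivity
            intro u hu w hw huw
            rcases Finset.mem_insert.mp hu with rfl | hu' <;>
              rcases Finset.mem_insert.mp hw with h' | hw'
            · rw [h']
            · exfalso
              rw [hfj, hfeq _ hw'] at huw
              rcases w with i2 | j2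
              · obtain ⟨a2, ha2, hfa2⟩ := hsideA i2 hw'
                rw [hfa2] at huw
                simp at huw
              · obtain ⟨b2, hb2, hfb2⟩ := hsideB j2 hw'
                rw [hfb2] at huw
                obtain rfl : b = b2 := by simpa using huw
                apply hbU
                rw [hU]
                refine Finset.mem_image.mpr ⟨j2, Finset.mem_filter.mpr
                  ⟨Finset.mem_univ _, hw'⟩, ?_⟩
                rw [hfb2]; rfl
            · exfalso
              rw [h', hfj, hfeq _ hu'] at huw
              rcases u with i2 | j2
              · obtain ⟨a2, ha2, hfa2⟩ := hsideA i2 hu'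
                rw [hfa2] at huw
                simp at huw
              · obtain ⟨b2, hb2, hfb2⟩ := hsideB j2 hu'
                rw [hfb2] at huw
                obtain rfl : b2 = b := by simpa using huw
                apply hbU
                rw [hU]
                refine Finset.mem_image.mpr ⟨j2, Finset.mem_filter.mpr
                  ⟨Finset.mem_univ _, hu'⟩, ?_⟩
                rw [hfb2]; rfl
            · rw [hfeq _ hu', hfeq _ hw'] at huw
              exact hinj u hu' w hw' huw
          · -- edges
            intro i'' j'' hi'' hj'' hadj
            have hi''S : Sum.inl i'' ∈ S := by
              rcases Finset.mem_insert.mp hi'' with heq | hmem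
              · exact absurd heq (by simp)
              · exact hmem
            rcases Finset.mem_insert.mp hj'' with heq | hmem
            · obtain rfl : j'' = j := by simpa using heq
              have hpi : parent (Sum.inr j'') = Sum.inl i'' := by
                rcases hedge (Sum.inl i'') (Sum.inr j'') hadj with ⟨hne', h'⟩ | ⟨hne', h'⟩
                · exact h'
                · exfalso
                  have := hclosed _ hi''S hne'
                  rw [h'] at this
                  exact hvS this
              have hii : i'' = i := by
                rw [hpi] at hpcase
                simpa using hpcase
              subst hii
              exact ⟨a, b, (hfeq _ hiS).trans hfa, hfj, habE'⟩
            · obtain ⟨a2, b2, h1, h2, h3⟩ := hedges i'' j'' hi''S hmem hadj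
              exact ⟨a2, b2, (hfeq _ hi''S).trans h1, (hfeq _ hmem).trans h2, h3⟩
  -- initialize with the root alone
  have hmain := main (Finset.univ \ {r}).card {r} (fun _ => Sum.inl a₀) rfl
    (Finset.mem_singleton_self r)
    (fun v hv hvr => absurd (Finset.mem_singleton.mp hv) hvr)
    (fun i _ => ⟨a₀, Finset.mem_image_of_mem _ he₀, rfl⟩)
    (fun j hj => absurd (Finset.mem_singleton.mp hj) (by rw [hr]; simp))
    (fun u hu w hw _ => (Finset.mem_singleton.mp hu).trans (Finset.mem_singleton.mp hw).symm)
    (fun i j hi hj hadj => absurd (Finset.mem_singleton.mp hj) (by rw [hr]; simp))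
  obtain ⟨g, hgA, hgB, hginj, hgedge⟩ := hmain
  refine ⟨fun i => Sum.elim id (fun _ => a₀) (g (Sum.inl i)),
    fun j => Sum.elim (fun _ => b₀) id (g (Sum.inr j)), ?_, ?_, ?_, ?_, ?_⟩
  · intro i1 i2 h12
    obtain ⟨a1, _, hg1⟩ := hgA i1
    obtain ⟨a2, _, hg2⟩ := hgA i2
    simp only [hg1, hg2, Sum.elim_inl, id_eq] at h12
    have := hginj (Sum.inl i1) (Sum.inl i2) (by rw [hg1, hg2, h12])
    simpa using this
  · intro j1 j2 h12
    obtain ⟨b1, _, hg1⟩ := hgB j1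
    obtain ⟨b2, _, hg2⟩ := hgB j2
    simp only [hg1, hg2, Sum.elim_inr, id_eq] at h12
    have := hginj (Sum.inr j1) (Sum.inr j2) (by rw [hg1, hg2, h12])
    simpa using this
  · intro i
    obtain ⟨a1, hmem, hg1⟩ := hgA i
    show Sum.elim id (fun _ => a₀) (g (Sum.inl i)) ∈ A
    rw [hg1]
    simp only [Sum.elim_inl, id_eq]
    obtain ⟨q, hq, rfl⟩ := Finset.mem_image.mp hmem
    exact himgA (Finset.mem_image_of_mem _ (hE'E hq))
  · intro j
    obtain ⟨b1, hmem, hg1⟩ := hgB j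
    show Sum.elim (fun _ => b₀) id (g (Sum.inr j)) ∈ B
    rw [hg1]
    simp only [Sum.elim_inr, id_eq]
    obtain ⟨q, hq, rfl⟩ := Finset.mem_image.mp hmem
    exact himgB (Finset.mem_image_of_mem _ (hE'E hq))
  · intro i j hadj
    obtain ⟨a1, b1, h1, h2, h3⟩ := hgedge i j hadj
    show (Sum.elim id (fun _ => a₀) (g (Sum.inl i)), Sum.elim (fun _ => b₀) id (g (Sum.inr j))) ∈ E
    rw [h1, h2]
    simp only [Sum.elim_inl, Sum.elim_inr, id_eq]
    exact hE'E h3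
end

section
/- Let a, b ≥ 1, r = a+b, and let T be a tree with bipartition (U,V), |U| = s, |V| = t. Let A be an a-uniform matching and B a b-uniform matching on disjoint vertex sets inside an r-uniform hypergraph H, and let H_1(A,B) = {e ∪ f : e ∈ A, f ∈ B, e ∪ f ∈ H}. If H_1(A,B) contains no copy of the (a,b)-blowup T(a,b), then |H_1(A,B)| ≤ (t−1)|A| + (s−1)|B|. -/
open Finset SimpleGraph

theorem clean_lemma {α : Type*} [DecidableEq α] (s t : ℕ) :
    ∀ Q : Finset (Finset α × Finset α),
      (t - 1) * (Q.image Prod.fst).card + (s - 1) * (Q.image Prod.snd).card < Q.card →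
      ∃ Q', Q' ⊆ Q ∧ Q'.Nonempty ∧ ∀ p ∈ Q',
        t ≤ (Q'.filter (fun q => q.1 = p.1)).card ∧
        s ≤ (Q'.filter (fun q => q.2 = p.2)).card := by
  intro Q
  induction Q using Finset.strongInduction with
  | _ Q ih =>
    intro hQ
    by_cases hgood : ∀ p ∈ Q, t ≤ (Q.filter (fun q => q.1 = p.1)).card ∧
        s ≤ (Q.filter (fun q => q.2 = p.2)).card
    · exact ⟨Q, le_refl _, Finset.card_pos.mp (by omega), hgood⟩
    · push_neg at hgood
      obtain ⟨p, hp, hbad⟩ := hgood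
      by_cases hrow : t ≤ (Q.filter (fun q => q.1 = p.1)).card
      · -- column bad
        have hcol : (Q.filter (fun q => q.2 = p.2)).card < s := by
          have := hbad hrow; omega
        set Q'' := Q.filter (fun q => ¬ q.2 = p.2) with hQ''
        have hsub : Q'' ⊆ Q := Finset.filter_subset _ _
        have hpnot : p ∉ Q'' := by simp [hQ'']
        have hss : Q'' ⊂ Q := Finset.ssubset_iff_of_subset hsub |>.mpr ⟨p, hp, hpnot⟩
        have hcards : (Q.filter (fun q => q.2 = p.2)).card + Q''.card = Q.card :=
          Finset.card_filter_add_card_filter_not _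
        have him1 : Q''.image Prod.snd ⊆ (Q.image Prod.snd).erase p.2 := by
          intro x hx
          simp only [Finset.mem_image, Finset.mem_filter, hQ''] at hx
          obtain ⟨q, ⟨hq1, hq2⟩, rfl⟩ := hx
          exact Finset.mem_erase.mpr ⟨hq2, Finset.mem_image_of_mem _ hq1⟩
        have hb2 : p.2 ∈ Q.image Prod.snd := Finset.mem_image_of_mem _ hp
        have him1c : (Q''.image Prod.snd).card ≤ (Q.image Prod.snd).card - 1 := by
          calc (Q''.image Prod.snd).card ≤ ((Q.image Prod.snd).erase p.2).card :=
                Finset.card_le_card him1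
            _ = (Q.image Prod.snd).card - 1 := Finset.card_erase_of_mem hb2
        have him2c : (Q''.image Prod.fst).card ≤ (Q.image Prod.fst).card :=
          Finset.card_le_card (Finset.image_subset_image hsub)
        have hbpos : 1 ≤ (Q.image Prod.snd).card := Finset.card_pos.mpr ⟨p.2, hb2⟩
        have hkey : (t - 1) * (Q''.image Prod.fst).card +
            (s - 1) * (Q''.image Prod.snd).card < Q''.card := by
          have hcol' : (Q.filter (fun q => q.2 = p.2)).card ≤ s - 1 := Nat.le_sub_one_of_lt hcol
          have e1 : (s - 1) * ((Q.image Prod.snd).card - 1) + (s - 1)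
              = (s - 1) * (Q.image Prod.snd).card := by
            conv_rhs => rw [← Nat.sub_add_cancel hbpos]
            rw [Nat.mul_add, Nat.mul_one]
          have step : (t - 1) * (Q''.image Prod.fst).card + (s - 1) * (Q''.image Prod.snd).card
              + (Q.filter (fun q => q.2 = p.2)).card
              < (Q.filter (fun q => q.2 = p.2)).card + Q''.card := by
            calc (t - 1) * (Q''.image Prod.fst).card + (s - 1) * (Q''.image Prod.snd).card
                  + (Q.filter (fun q => q.2 = p.2)).card
                ≤ (t - 1) * (Q.image Prod.fst).card + (s - 1) * ((Q.image Prod.snd).card - 1)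
                  + (s - 1) :=
                  add_le_add (add_le_add (Nat.mul_le_mul_left _ him2c)
                    (Nat.mul_le_mul_left _ him1c)) hcol'
              _ = (t - 1) * (Q.image Prod.fst).card + (s - 1) * (Q.image Prod.snd).card := by
                  rw [add_assoc, e1]
              _ < Q.card := hQ
              _ = (Q.filter (fun q => q.2 = p.2)).card + Q''.card := hcards.symm
          rw [add_comm (Q.filter (fun q => q.2 = p.2)).card Q''.card] at step
          exact lt_of_add_lt_add_right step
        obtain ⟨Q', hQ'1, hQ'2, hQ'3⟩ := ih Q'' hss hkey
        exact ⟨Q', hQ'1.trans hsub, hQ'2, hQ'3⟩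
      · -- row bad
        push_neg at hrow
        set Q'' := Q.filter (fun q => ¬ q.1 = p.1) with hQ''
        have hsub : Q'' ⊆ Q := Finset.filter_subset _ _
        have hpnot : p ∉ Q'' := by simp [hQ'']
        have hss : Q'' ⊂ Q := Finset.ssubset_iff_of_subset hsub |>.mpr ⟨p, hp, hpnot⟩
        have hcards : (Q.filter (fun q => q.1 = p.1)).card + Q''.card = Q.card :=
          Finset.card_filter_add_card_filter_not _
        have him1 : Q''.image Prod.fst ⊆ (Q.image Prod.fst).erase p.1 := by
          intro x hx
          simp only [Finset.mem_image, Finset.mem_filter, hQ''] at hx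
          obtain ⟨q, ⟨hq1, hq2⟩, rfl⟩ := hx
          exact Finset.mem_erase.mpr ⟨hq2, Finset.mem_image_of_mem _ hq1⟩
        have hb2 : p.1 ∈ Q.image Prod.fst := Finset.mem_image_of_mem _ hp
        have him1c : (Q''.image Prod.fst).card ≤ (Q.image Prod.fst).card - 1 := by
          calc (Q''.image Prod.fst).card ≤ ((Q.image Prod.fst).erase p.1).card :=
                Finset.card_le_card him1
            _ = (Q.image Prod.fst).card - 1 := Finset.card_erase_of_mem hb2
        have him2c : (Q''.image Prod.snd).card ≤ (Q.image Prod.snd).card :=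
          Finset.card_le_card (Finset.image_subset_image hsub)
        have hbpos : 1 ≤ (Q.image Prod.fst).card := Finset.card_pos.mpr ⟨p.1, hb2⟩
        have hkey : (t - 1) * (Q''.image Prod.fst).card +
            (s - 1) * (Q''.image Prod.snd).card < Q''.card := by
          have hrow' : (Q.filter (fun q => q.1 = p.1)).card ≤ t - 1 := Nat.le_sub_one_of_lt hrow
          have e1 : (t - 1) * ((Q.image Prod.fst).card - 1) + (t - 1)
              = (t - 1) * (Q.image Prod.fst).card := by
            conv_rhs => rw [← Nat.sub_add_cancel hbpos]
            rw [Nat.mul_add, Nat.mul_one]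
          have step : (t - 1) * (Q''.image Prod.fst).card + (s - 1) * (Q''.image Prod.snd).card
              + (Q.filter (fun q => q.1 = p.1)).card
              < (Q.filter (fun q => q.1 = p.1)).card + Q''.card := by
            calc (t - 1) * (Q''.image Prod.fst).card + (s - 1) * (Q''.image Prod.snd).card
                  + (Q.filter (fun q => q.1 = p.1)).card
                ≤ ((t - 1) * ((Q.image Prod.fst).card - 1) + (t - 1))
                  + (s - 1) * (Q.image Prod.snd).card := by
                  have := add_le_add (add_le_add (Nat.mul_le_mul_left (t-1) him1c)
                    (Nat.mul_le_mul_left (s-1) him2c)) hrow'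
                  calc (t - 1) * (Q''.image Prod.fst).card + (s - 1) * (Q''.image Prod.snd).card
                        + (Q.filter (fun q => q.1 = p.1)).card
                      ≤ (t - 1) * ((Q.image Prod.fst).card - 1) + (s - 1) * (Q.image Prod.snd).card
                        + (t - 1) := this
                    _ = ((t - 1) * ((Q.image Prod.fst).card - 1) + (t - 1))
                        + (s - 1) * (Q.image Prod.snd).card := by ring
              _ = (t - 1) * (Q.image Prod.fst).card + (s - 1) * (Q.image Prod.snd).card := by
                  rw [e1]
              _ < Q.card := hQ
              _ = (Q.filter (fun q => q.1 = p.1)).card + Q''.card := hcards.symm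
          rw [add_comm (Q.filter (fun q => q.1 = p.1)).card Q''.card] at step
          exact lt_of_add_lt_add_right step
        obtain ⟨Q', hQ'1, hQ'2, hQ'3⟩ := ih Q'' hss hkey
        exact ⟨Q', hQ'1.trans hsub, hQ'2, hQ'3⟩

theorem embed_lemma {α : Type*} [DecidableEq α] {s t : ℕ}
    (T : SimpleGraph (Fin s ⊕ Fin t)) (hT : T.IsTree)
    (hb1 : ∀ i j : Fin s, ¬ T.Adj (Sum.inl i) (Sum.inl j))
    (hb2 : ∀ i j : Fin t, ¬ T.Adj (Sum.inr i) (Sum.inr j))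
    (A B : Finset (Finset α))
    (hne : ∀ e ∈ A, ∀ f ∈ B, e ≠ f)
    (Q : Finset (Finset α × Finset α)) (hQ : Q ⊆ A ×ˢ B)
    (hdeg : ∀ p ∈ Q, t ≤ (Q.filter (fun q => q.1 = p.1)).card ∧
        s ≤ (Q.filter (fun q => q.2 = p.2)).card)
    (hQne : Q.Nonempty) (hs : 1 ≤ s) :
    ∃ ψ : (Fin s ⊕ Fin t) → Finset α, Function.Injective ψ ∧
      (∀ i, ψ (Sum.inl i) ∈ A) ∧ (∀ j, ψ (Sum.inr j) ∈ B) ∧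
      (∀ i j, T.Adj (Sum.inl i) (Sum.inr j) → (ψ (Sum.inl i), ψ (Sum.inr j)) ∈ Q) := by
  classical
  have main : ∀ n : ℕ, ∀ S : Finset (Fin s ⊕ Fin t), ∀ φ : (Fin s ⊕ Fin t) → Finset α,
      Sᶜ.card ≤ n → S.Nonempty →
      (∀ x ∈ S, ∀ y ∈ S, ∀ q : T.Walk x y, q.IsPath → ∀ z ∈ q.support, z ∈ S) →
      Set.InjOn φ S →
      (∀ i, Sum.inl i ∈ S → ∃ f, (φ (Sum.inl i), f) ∈ Q) →
      (∀ j, Sum.inr j ∈ S → ∃ e, (e, φ (Sum.inr j)) ∈ Q) →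
      (∀ i j, Sum.inl i ∈ S → Sum.inr j ∈ S → T.Adj (Sum.inl i) (Sum.inr j) →
        (φ (Sum.inl i), φ (Sum.inr j)) ∈ Q) →
      ∃ ψ : (Fin s ⊕ Fin t) → Finset α, Function.Injective ψ ∧
        (∀ i, ψ (Sum.inl i) ∈ A) ∧ (∀ j, ψ (Sum.inr j) ∈ B) ∧
        (∀ i j, T.Adj (Sum.inl i) (Sum.inr j) → (ψ (Sum.inl i), ψ (Sum.inr j)) ∈ Q) := by
    intro n
    induction n with
    | zero =>
      intro S φ hcard _ _ hinj hsuppl hsuppr hedge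
      have hSuniv : S = Finset.univ := by
        have h0 : Sᶜ.card = 0 := Nat.le_zero.mp hcard
        have := Finset.card_eq_zero.mp h0
        rwa [Finset.compl_eq_empty_iff] at this
      subst hSuniv
      refine ⟨φ, ?_, ?_, ?_, ?_⟩
      · intro x y hxy
        exact hinj (by simp) (by simp) hxy
      · intro i
        obtain ⟨f, hf⟩ := hsuppl i (Finset.mem_univ _)
        exact (Finset.mem_product.mp (hQ hf)).1
      · intro j
        obtain ⟨e, he⟩ := hsuppr j (Finset.mem_univ _)
        exact (Finset.mem_product.mp (hQ he)).2
      · intro i j hadj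
        exact hedge i j (Finset.mem_univ _) (Finset.mem_univ _) hadj
    | succ n ihn =>
      intro S φ hcard hSne hcvx hinj hsuppl hsuppr hedge
      by_cases hSuniv : S = Finset.univ
      · exact ihn S φ (by simp [hSuniv]) hSne hcvx hinj hsuppl hsuppr hedge
      -- find a crossing edge u ∈ S, v ∉ S
      have cross : ∀ (x y : Fin s ⊕ Fin t) (p : T.Walk x y), x ∈ S → y ∉ S →
          ∃ u ∈ S, ∃ v, v ∉ S ∧ T.Adj u v := by
        intro x y p
        induction p with
        | nil => intro h1 h2; exact absurd h1 h2
        | @cons a c d h p ih =>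
          intro h1 h2
          by_cases hm : c ∈ S
          · exact ih hm h2
          · exact ⟨a, h1, c, hm, h⟩
      obtain ⟨x₀, hx₀⟩ := hSne
      obtain ⟨y₀, hy₀⟩ : ∃ y, y ∉ S := by
        by_contra hcon
        push_neg at hcon
        exact hSuniv (Finset.eq_univ_iff_forall.mpr hcon)
      obtain ⟨p₀⟩ := hT.isConnected.preconnected x₀ y₀
      obtain ⟨u, hu, v, hv, huv⟩ := cross x₀ y₀ p₀ hx₀ hy₀
      have hSne' : S.Nonempty := ⟨u, hu⟩
      -- v has a unique neighbour in S, namely u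
      have huniq : ∀ u' ∈ S, T.Adj u' v → u' = u := by
        intro u' hu' hadj
        by_contra hneq
        have hvu : v ≠ u := fun h => hv (h ▸ hu)
        have hvu' : v ≠ u' := fun h => hv (h ▸ hu')
        have hw2 : (Walk.cons huv (Walk.cons hadj.symm Walk.nil) : T.Walk u u').IsPath := by
          rw [Walk.cons_isPath_iff, Walk.cons_isPath_iff]
          refine ⟨⟨Walk.IsPath.nil, ?_⟩, ?_⟩
          · simp only [Walk.support_nil, List.mem_singleton]
            exact hvu'
          · simp only [Walk.support_cons, Walk.support_nil, List.mem_cons,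
              List.mem_singleton, List.not_mem_nil, or_false]
            push_neg
            exact ⟨Ne.symm hvu, fun h => hneq h.symm⟩
        have hvmem : v ∈ (Walk.cons huv (Walk.cons hadj.symm Walk.nil) : T.Walk u u').support := by
          simp [Walk.support_cons]
        exact hv (hcvx u hu u' hu' _ hw2 v hvmem)
      -- convexity of `insert v S`
      have hclaim : ∀ x ∈ S, ∀ w : T.Walk v x, w.IsPath → ∀ z ∈ w.support,
          z ∈ insert v S := by
        intro x hx w hw z hz
        obtain ⟨r0⟩ := hT.isConnected.preconnected x u
        have hrS : ∀ z ∈ (r0.toPath.1 : T.Walk x u).support, z ∈ S :=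
          hcvx x hx u hu r0.toPath.1 r0.toPath.2
        have hvnr : v ∉ (r0.toPath.1 : T.Walk x u).reverse.support := by
          rw [Walk.support_reverse]
          intro hmem
          exact hv (hrS v (List.mem_reverse.mp hmem))
        have hw0 : (Walk.cons huv.symm (r0.toPath.1 : T.Walk x u).reverse : T.Walk v x).IsPath := by
          rw [Walk.cons_isPath_iff]
          exact ⟨r0.toPath.2.reverse, hvnr⟩
        have hww0 : w = Walk.cons huv.symm (r0.toPath.1 : T.Walk x u).reverse :=
          (hT.existsUnique_path v x).unique hw hw0
        rw [hww0] at hz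
        simp only [Walk.support_cons, List.mem_cons] at hz
        rcases hz with rfl | hz
        · exact Finset.mem_insert_self _ _
        · refine Finset.mem_insert_of_mem (hrS z ?_)
          rw [Walk.support_reverse] at hz
          exact List.mem_reverse.mp hz
      have hcvx' : ∀ x ∈ insert v S, ∀ y ∈ insert v S, ∀ q : T.Walk x y, q.IsPath →
          ∀ z ∈ q.support, z ∈ insert v S := by
        intro x hx y hy q hq z hz
        rcases Finset.mem_insert.mp hx with rfl | hxS
        · rcases Finset.mem_insert.mp hy with rfl | hyS
          · rw [(hT.existsUnique_path _ _).unique hq Walk.IsPath.nil] at hz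
            simp only [Walk.support_nil, List.mem_singleton] at hz
            subst hz
            exact Finset.mem_insert_self _ _
          · exact hclaim y hyS q hq z hz
        · rcases Finset.mem_insert.mp hy with rfl | hyS
          · refine hclaim x hxS q.reverse hq.reverse z ?_
            rw [Walk.support_reverse]
            exact List.mem_reverse.mpr hz
          · exact Finset.mem_insert_of_mem (hcvx x hxS y hyS q hq z hz)
      have hccard : (insert v S)ᶜ.card ≤ n := by
        rw [Finset.compl_insert, Finset.card_erase_of_mem (Finset.mem_compl.mpr hv)]
        omega
      -- now extend the embedding, by cases on v
      rcases v with i | j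
      · -- v = inl i, so u = inr j'
        rcases u with i'' | j'
        · exact absurd huv (hb1 _ _)
        obtain ⟨e0, he0⟩ := hsuppr j' hu
        have hcolcard : s ≤ (Q.filter (fun q => q.2 = φ (Sum.inr j'))).card :=
          (hdeg _ he0).2
        have hinjfst : Set.InjOn Prod.fst (↑(Q.filter (fun q => q.2 = φ (Sum.inr j'))) : Set (Finset α × Finset α)) := by
          intro p1 h1 p2 h2 h12
          have e1 := (Finset.mem_filter.mp h1).2
          have e2 := (Finset.mem_filter.mp h2).2
          exact Prod.ext h12 (e1.trans e2.symm)
        have hColcard : s ≤ ((Q.filter (fun q => q.2 = φ (Sum.inr j'))).image Prod.fst).card := by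
          rwa [Finset.card_image_of_injOn hinjfst]
        have hiIset : i ∉ Finset.univ.filter (fun i' : Fin s => Sum.inl i' ∈ S) := by
          simp only [Finset.mem_filter, Finset.mem_univ, true_and]
          exact hv
        have hIcard : (Finset.univ.filter (fun i' : Fin s => Sum.inl i' ∈ S)).card ≤ s - 1 := by
          have hsub : Finset.univ.filter (fun i' : Fin s => Sum.inl i' ∈ S) ⊆
              Finset.univ.erase i := by
            intro x hx
            exact Finset.mem_erase.mpr ⟨fun h => hiIset (h ▸ hx), Finset.mem_univ _⟩
          calc (Finset.univ.filter (fun i' : Fin s => Sum.inl i' ∈ S)).card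
              ≤ (Finset.univ.erase i).card := Finset.card_le_card hsub
            _ = s - 1 := by rw [Finset.card_erase_of_mem (Finset.mem_univ _)]; simp
        have hImcard : ((Finset.univ.filter (fun i' : Fin s => Sum.inl i' ∈ S)).image
            (fun i' => φ (Sum.inl i'))).card ≤ s - 1 :=
          le_trans Finset.card_image_le hIcard
        have hex : (((Q.filter (fun q => q.2 = φ (Sum.inr j'))).image Prod.fst) \
            ((Finset.univ.filter (fun i' : Fin s => Sum.inl i' ∈ S)).image
              (fun i' => φ (Sum.inl i')))).Nonempty := by
          rw [← Finset.card_pos]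
          have := Finset.le_card_sdiff
            ((Finset.univ.filter (fun i' : Fin s => Sum.inl i' ∈ S)).image
              (fun i' => φ (Sum.inl i')))
            ((Q.filter (fun q => q.2 = φ (Sum.inr j'))).image Prod.fst)
          omega
        obtain ⟨e', he'⟩ := hex
        obtain ⟨he'C, he'I⟩ := Finset.mem_sdiff.mp he'
        obtain ⟨q', hq'f, hq'1⟩ := Finset.mem_image.mp he'C
        have hq'Q : q' ∈ Q := (Finset.mem_filter.mp hq'f).1
        have hq'2 : q'.2 = φ (Sum.inr j') := (Finset.mem_filter.mp hq'f).2
        have hpair : (e', φ (Sum.inr j')) ∈ Q := by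
          have : (e', φ (Sum.inr j')) = q' := by
            rw [← hq'1, ← hq'2]
          rwa [this]
        have he'A : e' ∈ A := (Finset.mem_product.mp (hQ hpair)).1
        set ψ := Function.update φ (Sum.inl i) e' with hψ
        have hψv : ψ (Sum.inl i) = e' := Function.update_self _ _ _
        have hψS : ∀ x ∈ S, ψ x = φ x := by
          intro x hx
          refine Function.update_of_ne ?_ _ _
          rintro rfl
          exact hv hx
        refine ihn (insert (Sum.inl i) S) ψ hccard (Finset.insert_nonempty _ _) hcvx' ?_ ?_ ?_ ?_
        · -- injectivity
          intro x hx y hy hxy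
          simp only [Finset.coe_insert, Set.mem_insert_iff, Finset.mem_coe] at hx hy
          rcases hx with rfl | hxS
          · rcases hy with rfl | hyS
            · rfl
            · exfalso
              rw [hψv, hψS y hyS] at hxy
              rcases y with iy | jy
              · exact he'I (Finset.mem_image.mpr ⟨iy,
                  Finset.mem_filter.mpr ⟨Finset.mem_univ _, hyS⟩, hxy.symm⟩)
              · obtain ⟨ey, hey⟩ := hsuppr jy hyS
                have hyB : φ (Sum.inr jy) ∈ B := (Finset.mem_product.mp (hQ hey)).2
                exact hne e' he'A _ hyB hxy
          · rcases hy with rfl | hyS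
            · exfalso
              rw [hψv, hψS x hxS] at hxy
              rcases x with ix | jx
              · exact he'I (Finset.mem_image.mpr ⟨ix,
                  Finset.mem_filter.mpr ⟨Finset.mem_univ _, hxS⟩, hxy⟩)
              · obtain ⟨ex, hex'⟩ := hsuppr jx hxS
                have hxB : φ (Sum.inr jx) ∈ B := (Finset.mem_product.mp (hQ hex')).2
                exact hne e' he'A _ hxB hxy.symm
            · rw [hψS x hxS, hψS y hyS] at hxy
              exact hinj hxS hyS hxy
        · -- inl support
          intro i1 hi1
          rcases Finset.mem_insert.mp hi1 with heq | hi1S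
          · have : i1 = i := by injection heq
            subst this
            rw [hψv]
            exact ⟨φ (Sum.inr j'), hpair⟩
          · obtain ⟨f, hf⟩ := hsuppl i1 hi1S
            exact ⟨f, by rw [hψS _ hi1S]; exact hf⟩
        · -- inr support
          intro j1 hj1
          rcases Finset.mem_insert.mp hj1 with heq | hj1S
          · exact absurd heq (by simp)
          · obtain ⟨e, he⟩ := hsuppr j1 hj1S
            exact ⟨e, by rw [hψS _ hj1S]; exact he⟩
        · -- edges
          intro i1 j1 h1 h2 hadj
          have hj1S : Sum.inr j1 ∈ S := by
            rcases Finset.mem_insert.mp h2 with heq | h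
            · exact absurd heq (by simp)
            · exact h
          rcases Finset.mem_insert.mp h1 with heq | hi1S
          · have : i1 = i := by injection heq
            subst this
            have := huniq (Sum.inr j1) hj1S hadj.symm
            have hj1j' : j1 = j' := by injection this
            subst hj1j'
            rw [hψv, hψS _ hj1S]
            exact hpair
          · rw [hψS _ hi1S, hψS _ hj1S]
            exact hedge i1 j1 hi1S hj1S hadj
      · -- v = inr j, so u = inl i'
        rcases u with i' | j''
        swap
        · exact absurd huv (hb2 _ _)
        obtain ⟨f0, hf0⟩ := hsuppl i' hu
        have ht1 : 1 ≤ t := j.pos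
        have hrowcard : t ≤ (Q.filter (fun q => q.1 = φ (Sum.inl i'))).card :=
          (hdeg _ hf0).1
        have hinjsnd : Set.InjOn Prod.snd (↑(Q.filter (fun q => q.1 = φ (Sum.inl i'))) : Set (Finset α × Finset α)) := by
          intro p1 h1 p2 h2 h12
          have e1 := (Finset.mem_filter.mp h1).2
          have e2 := (Finset.mem_filter.mp h2).2
          exact Prod.ext (e1.trans e2.symm) h12
        have hRowcard : t ≤ ((Q.filter (fun q => q.1 = φ (Sum.inl i'))).image Prod.snd).card := by
          rwa [Finset.card_image_of_injOn hinjsnd]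
        have hjJset : j ∉ Finset.univ.filter (fun j1 : Fin t => Sum.inr j1 ∈ S) := by
          simp only [Finset.mem_filter, Finset.mem_univ, true_and]
          exact hv
        have hJcard : (Finset.univ.filter (fun j1 : Fin t => Sum.inr j1 ∈ S)).card ≤ t - 1 := by
          have hsub : Finset.univ.filter (fun j1 : Fin t => Sum.inr j1 ∈ S) ⊆
              Finset.univ.erase j := by
            intro x hx
            exact Finset.mem_erase.mpr ⟨fun h => hjJset (h ▸ hx), Finset.mem_univ _⟩
          calc (Finset.univ.filter (fun j1 : Fin t => Sum.inr j1 ∈ S)).card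
              ≤ (Finset.univ.erase j).card := Finset.card_le_card hsub
            _ = t - 1 := by rw [Finset.card_erase_of_mem (Finset.mem_univ _)]; simp
        have hImcard : ((Finset.univ.filter (fun j1 : Fin t => Sum.inr j1 ∈ S)).image
            (fun j1 => φ (Sum.inr j1))).card ≤ t - 1 :=
          le_trans Finset.card_image_le hJcard
        have hex : (((Q.filter (fun q => q.1 = φ (Sum.inl i'))).image Prod.snd) \
            ((Finset.univ.filter (fun j1 : Fin t => Sum.inr j1 ∈ S)).image
              (fun j1 => φ (Sum.inr j1)))).Nonempty := by
          rw [← Finset.card_pos]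
          have := Finset.le_card_sdiff
            ((Finset.univ.filter (fun j1 : Fin t => Sum.inr j1 ∈ S)).image
              (fun j1 => φ (Sum.inr j1)))
            ((Q.filter (fun q => q.1 = φ (Sum.inl i'))).image Prod.snd)
          omega
        obtain ⟨f', hf'⟩ := hex
        obtain ⟨hf'R, hf'I⟩ := Finset.mem_sdiff.mp hf'
        obtain ⟨q', hq'f, hq'2⟩ := Finset.mem_image.mp hf'R
        have hq'Q : q' ∈ Q := (Finset.mem_filter.mp hq'f).1
        have hq'1 : q'.1 = φ (Sum.inl i') := (Finset.mem_filter.mp hq'f).2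
        have hpair : (φ (Sum.inl i'), f') ∈ Q := by
          have : (φ (Sum.inl i'), f') = q' := by
            rw [← hq'1, ← hq'2]
          rwa [this]
        have hf'B : f' ∈ B := (Finset.mem_product.mp (hQ hpair)).2
        set ψ := Function.update φ (Sum.inr j) f' with hψ
        have hψv : ψ (Sum.inr j) = f' := Function.update_self _ _ _
        have hψS : ∀ x ∈ S, ψ x = φ x := by
          intro x hx
          refine Function.update_of_ne ?_ _ _
          rintro rfl
          exact hv hx
        refine ihn (insert (Sum.inr j) S) ψ hccard (Finset.insert_nonempty _ _) hcvx' ?_ ?_ ?_ ?_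
        · -- injectivity
          intro x hx y hy hxy
          simp only [Finset.coe_insert, Set.mem_insert_iff, Finset.mem_coe] at hx hy
          rcases hx with rfl | hxS
          · rcases hy with rfl | hyS
            · rfl
            · exfalso
              rw [hψv, hψS y hyS] at hxy
              rcases y with iy | jy
              · obtain ⟨fy, hfy⟩ := hsuppl iy hyS
                have hyA : φ (Sum.inl iy) ∈ A := (Finset.mem_product.mp (hQ hfy)).1
                exact hne _ hyA f' hf'B hxy.symm
              · exact hf'I (Finset.mem_image.mpr ⟨jy,
                  Finset.mem_filter.mpr ⟨Finset.mem_univ _, hyS⟩, hxy.symm⟩)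
          · rcases hy with rfl | hyS
            · exfalso
              rw [hψv, hψS x hxS] at hxy
              rcases x with ix | jx
              · obtain ⟨fx, hfx⟩ := hsuppl ix hxS
                have hxA : φ (Sum.inl ix) ∈ A := (Finset.mem_product.mp (hQ hfx)).1
                exact hne _ hxA f' hf'B hxy
              · exact hf'I (Finset.mem_image.mpr ⟨jx,
                  Finset.mem_filter.mpr ⟨Finset.mem_univ _, hxS⟩, hxy⟩)
            · rw [hψS x hxS, hψS y hyS] at hxy
              exact hinj hxS hyS hxy
        · -- inl support
          intro i1 hi1
          rcases Finset.mem_insert.mp hi1 with heq | hi1S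
          · exact absurd heq (by simp)
          · obtain ⟨f, hf⟩ := hsuppl i1 hi1S
            exact ⟨f, by rw [hψS _ hi1S]; exact hf⟩
        · -- inr support
          intro j1 hj1
          rcases Finset.mem_insert.mp hj1 with heq | hj1S
          · have : j1 = j := by injection heq
            subst this
            rw [hψv]
            exact ⟨φ (Sum.inl i'), hpair⟩
          · obtain ⟨e, he⟩ := hsuppr j1 hj1S
            exact ⟨e, by rw [hψS _ hj1S]; exact he⟩
        · -- edges
          intro i1 j1 h1 h2 hadj
          have hi1S : Sum.inl i1 ∈ S := by
            rcases Finset.mem_insert.mp h1 with heq | h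
            · exact absurd heq (by simp)
            · exact h
          rcases Finset.mem_insert.mp h2 with heq | hj1S
          · have : j1 = j := by injection heq
            subst this
            have := huniq (Sum.inl i1) hi1S hadj
            have hi1i' : i1 = i' := by injection this
            subst hi1i'
            rw [hψv, hψS _ hi1S]
            exact hpair
          · rw [hψS _ hi1S, hψS _ hj1S]
            exact hedge i1 j1 hi1S hj1S hadj
  -- start the induction with a single vertex
  obtain ⟨q0, hq0⟩ := hQne
  have i₀ : Fin s := ⟨0, hs⟩
  refine main (Finset.univ : Finset (Fin s ⊕ Fin t)).card {Sum.inl i₀} (fun _ => q0.1)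
    (Finset.card_le_card (Finset.subset_univ _)) ⟨_, Finset.mem_singleton_self _⟩
    ?_ ?_ ?_ ?_ ?_
  · -- convexity of singleton
    intro x hx y hy q hq z hz
    rw [Finset.mem_singleton] at hx hy
    subst hx
    subst hy
    have hnil : (Walk.nil : T.Walk (Sum.inl i₀) (Sum.inl i₀)).IsPath := Walk.IsPath.nil
    have := (hT.existsUnique_path _ _).unique hq hnil
    rw [this] at hz
    simpa using hz
  · intro x hx y hy _
    rw [Finset.coe_singleton, Set.mem_singleton_iff] at hx hy
    rw [hx, hy]
  · intro i hi
    exact ⟨q0.2, by simpa using hq0⟩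
  · intro j hj
    simp at hj
  · intro i j hi hj
    simp at hj


/-- The hypergraph `H₁(A,B)`: edges of `H` of the form `e ∪ f` with `e ∈ A`, `f ∈ B`. -/
def templateEdges {α : Type*} [DecidableEq α] (H A B : Finset (Finset α)) :
    Finset (Finset α) :=
  ((A ×ˢ B).filter (fun p => p.1 ∪ p.2 ∈ H)).image (fun p => p.1 ∪ p.2)

/-- `H₁` contains a copy of the `(a,b)`-blowup of the bipartite tree `T` on
`Fin s ⊕ Fin t`: pairwise disjoint `a`-sets `U i` and `b`-sets `W j` with
`U i ∪ W j ∈ H₁` for each edge `(inl i, inr j)` of `T`. -/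
def HasBlowupCopy {α : Type*} [DecidableEq α] (a b s t : ℕ)
    (T : SimpleGraph (Fin s ⊕ Fin t)) (H₁ : Finset (Finset α)) : Prop :=
  ∃ (U : Fin s → Finset α) (W : Fin t → Finset α),
    (∀ i, (U i).card = a) ∧ (∀ j, (W j).card = b) ∧
    (∀ i i', i ≠ i' → Disjoint (U i) (U i')) ∧
    (∀ j j', j ≠ j' → Disjoint (W j) (W j')) ∧
    (∀ i j, Disjoint (U i) (W j)) ∧
    (∀ i j, T.Adj (Sum.inl i) (Sum.inr j) → U i ∪ W j ∈ H₁)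

/-- If `A` is an `a`-uniform matching, `B` a `b`-uniform matching, vertex-disjoint
from each other, and `H₁(A,B)` contains no copy of the `(a,b)`-blowup of the tree
`T` with bipartition classes of sizes `s`, `t`, then
`|H₁(A,B)| ≤ (t-1)|A| + (s-1)|B|`. -/
theorem stmt_12 {α : Type*} [DecidableEq α] (a b r s t : ℕ)
    (ha : 1 ≤ a) (hb : 1 ≤ b) (hr : r = a + b)
    (T : SimpleGraph (Fin s ⊕ Fin t)) (hT : T.IsTree)
    (hb1 : ∀ i j : Fin s, ¬ T.Adj (Sum.inl i) (Sum.inl j))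
    (hb2 : ∀ i j : Fin t, ¬ T.Adj (Sum.inr i) (Sum.inr j))
    (H A B : Finset (Finset α))
    (hHr : ∀ e ∈ H, e.card = r)
    (hAa : ∀ e ∈ A, e.card = a) (hBb : ∀ f ∈ B, f.card = b)
    (hAm : ∀ e ∈ A, ∀ e' ∈ A, e ≠ e' → Disjoint e e')
    (hBm : ∀ f ∈ B, ∀ f' ∈ B, f ≠ f' → Disjoint f f')
    (hAB : ∀ e ∈ A, ∀ f ∈ B, Disjoint e f)
    (hfree : ¬ HasBlowupCopy a b s t T (templateEdges H A B)) :
    (templateEdges H A B).card ≤ (t - 1) * A.card + (s - 1) * B.card := by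
  classical
  -- A-sets and B-sets are never equal
  have hneAB : ∀ e ∈ A, ∀ f ∈ B, e ≠ f := by
    intro e heA f hfB hef
    have hd : Disjoint e e := by
      nth_rewrite 2 [hef]
      exact hAB e heA f hfB
    rw [disjoint_self] at hd
    have hcard := hAa e heA
    rw [hd] at hcard
    simp at hcard
    omega
  by_cases hs0 : s = 0
  · -- degenerate: s = 0 forces t = 1, and H₁ must be empty
    subst hs0
    have hnoadj : ∀ x y : Fin 0 ⊕ Fin t, ¬ T.Adj x y := by
      rintro (i | j) (i' | j') h
      · exact i.elim0
      · exact i.elim0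
      · exact i'.elim0
      · exact hb2 _ _ h
    have hsub : ∀ j j' : Fin t, j = j' := by
      intro j j'
      obtain ⟨w⟩ := hT.isConnected.preconnected (Sum.inr j) (Sum.inr j')
      cases w with
      | nil => rfl
      | cons h _ => exact absurd h (hnoadj _ _)
    have hempty : templateEdges H A B = ∅ := by
      rw [Finset.eq_empty_iff_forall_notMem]
      intro g hg
      obtain ⟨p, hp, rfl⟩ := Finset.mem_image.mp hg
      have hpB : p.2 ∈ B := (Finset.mem_product.mp (Finset.mem_filter.mp hp).1).2
      exact hfree ⟨fun i => i.elim0, fun _ => p.2, fun i => i.elim0,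
        fun _ => hBb _ hpB, fun i => i.elim0, fun j j' hjj => absurd (hsub j j') hjj,
        fun i => i.elim0, fun i => i.elim0⟩
    simp [hempty]
  · by_cases ht0 : t = 0
    · -- degenerate: t = 0 forces s = 1, and H₁ must be empty
      subst ht0
      have hnoadj : ∀ x y : Fin s ⊕ Fin 0, ¬ T.Adj x y := by
        rintro (i1 | j1) (i1' | j1') h
        · exact hb1 _ _ h
        · exact j1'.elim0
        · exact j1.elim0
        · exact j1.elim0
      have hs1 : ∀ i i' : Fin s, i = i' := by
        intro i i'
        obtain ⟨w⟩ := hT.isConnected.preconnected (Sum.inl i) (Sum.inl i')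
        cases w with
        | nil => rfl
        | cons h _ => exact absurd h (hnoadj _ _)
      have hempty : templateEdges H A B = ∅ := by
        rw [Finset.eq_empty_iff_forall_notMem]
        intro g hg
        obtain ⟨p, hp, rfl⟩ := Finset.mem_image.mp hg
        have hpA : p.1 ∈ A := (Finset.mem_product.mp (Finset.mem_filter.mp hp).1).1
        exact hfree ⟨fun _ => p.1, fun j => j.elim0, fun _ => hAa _ hpA,
          fun j => j.elim0, fun i i' hii => absurd (hs1 i i') hii,
          fun j => j.elim0, fun i j => j.elim0, fun i j => j.elim0⟩
      simp [hempty]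
    · -- main case: s ≥ 1 and t ≥ 1
      have hs : 1 ≤ s := Nat.one_le_iff_ne_zero.mpr hs0
      by_contra hgt
      push_neg at hgt
      set P := (A ×ˢ B).filter (fun p => p.1 ∪ p.2 ∈ H) with hP
      have hPcard : (t - 1) * A.card + (s - 1) * B.card < P.card :=
        lt_of_lt_of_le hgt Finset.card_image_le
      have hPsub : P ⊆ A ×ˢ B := Finset.filter_subset _ _
      have himA : P.image Prod.fst ⊆ A := by
        intro x hx
        obtain ⟨p, hp, rfl⟩ := Finset.mem_image.mp hx
        exact (Finset.mem_product.mp (hPsub hp)).1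
      have himB : P.image Prod.snd ⊆ B := by
        intro x hx
        obtain ⟨p, hp, rfl⟩ := Finset.mem_image.mp hx
        exact (Finset.mem_product.mp (hPsub hp)).2
      have hclean : (t - 1) * (P.image Prod.fst).card + (s - 1) * (P.image Prod.snd).card
          < P.card := by
        calc (t - 1) * (P.image Prod.fst).card + (s - 1) * (P.image Prod.snd).card
            ≤ (t - 1) * A.card + (s - 1) * B.card :=
              add_le_add (Nat.mul_le_mul_left _ (Finset.card_le_card himA))
                (Nat.mul_le_mul_left _ (Finset.card_le_card himB))
          _ < P.card := hPcard
      obtain ⟨Q, hQP, hQne, hQdeg⟩ := clean_lemma s t P hclean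
      obtain ⟨ψ, hψinj, hψA, hψB, hψedge⟩ := embed_lemma T hT hb1 hb2 A B hneAB Q
        (hQP.trans hPsub) hQdeg hQne hs
      refine hfree ⟨fun i => ψ (Sum.inl i), fun j => ψ (Sum.inr j),
        fun i => hAa _ (hψA i), fun j => hBb _ (hψB j), ?_, ?_, ?_, ?_⟩
      · intro i i' hii
        refine hAm _ (hψA i) _ (hψA i') fun he => hii ?_
        have := hψinj he
        injection this
      · intro j j' hjj
        refine hBm _ (hψB j) _ (hψB j') fun he => hjj ?_
        have := hψinj he
        injection this
      · intro i j
        exact hAB _ (hψA i) _ (hψB j)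
      · intro i j hadj
        have hQmem := hψedge i j hadj
        have hPmem : (ψ (Sum.inl i), ψ (Sum.inr j)) ∈ P := hQP hQmem
        exact Finset.mem_image.mpr ⟨_, hPmem, rfl⟩
end

section
/- Let a, b ≥ 1, r = a+b, and let T be a tree with bipartition classes of sizes s, t. Then the (a,b)-blowup T(a,b) has a crosscut, and its minimum crosscut size equals min(s, t). -/
/-- The `(a,b)`-blowup of the bipartite tree `T` determined by the disjoint
`a`-sets `U i` and `b`-sets `W j`. -/
def blowup {α : Type*} [DecidableEq α] {s t : ℕ} (T : SimpleGraph (Fin s ⊕ Fin t))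
    [DecidableRel T.Adj] (U : Fin s → Finset α) (W : Fin t → Finset α) :
    Finset (Finset α) :=
  ((Finset.univ ×ˢ Finset.univ).filter
      (fun p : Fin s × Fin t => T.Adj (Sum.inl p.1) (Sum.inr p.2))).image
    (fun p => U p.1 ∪ W p.2)

lemma card_le_aux {α : Type*} [DecidableEq α] {n : ℕ} (A : Fin n → Finset α) (X : Finset α)
    (hsub : ∀ i, A i ⊆ X) (hne : ∀ i, (A i).Nonempty)
    (hdis : ∀ i j : Fin n, i ≠ j → Disjoint (A i) (A j)) : n ≤ X.card := by
  calc n = ∑ _i : Fin n, 1 := by simp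
  _ ≤ ∑ i, (A i).card := Finset.sum_le_sum fun i _ => (hne i).card_pos
  _ = (Finset.univ.biUnion A).card := (Finset.card_biUnion (fun i _ j _ h => hdis i j h)).symm
  _ ≤ X.card := Finset.card_le_card (by
      intro x hx
      simp only [Finset.mem_biUnion] at hx
      obtain ⟨i, _, hi⟩ := hx
      exact hsub i hi)

lemma mem_blowup {α : Type*} [DecidableEq α] {s t : ℕ} (T : SimpleGraph (Fin s ⊕ Fin t))
    [DecidableRel T.Adj] (U : Fin s → Finset α) (W : Fin t → Finset α) (e : Finset α) :
    e ∈ blowup T U W ↔ ∃ i j, T.Adj (Sum.inl i) (Sum.inr j) ∧ U i ∪ W j = e := by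
  simp only [blowup, Finset.mem_image, Finset.mem_filter, Finset.mem_product,
    Finset.mem_univ, true_and, Prod.exists]

/-- The `(a,b)`-blowup of a tree with bipartition classes of sizes `s`, `t` has a
crosscut, and its minimum crosscut size equals `min s t`. -/
theorem stmt_14 {α : Type*} [DecidableEq α] (a b s t : ℕ)
    (ha : 1 ≤ a) (hb : 1 ≤ b) (hs : 1 ≤ s) (ht : 1 ≤ t)
    (T : SimpleGraph (Fin s ⊕ Fin t)) [DecidableRel T.Adj] (hT : T.IsTree)
    (hb1 : ∀ i j : Fin s, ¬ T.Adj (Sum.inl i) (Sum.inl j))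
    (hb2 : ∀ i j : Fin t, ¬ T.Adj (Sum.inr i) (Sum.inr j))
    (U : Fin s → Finset α) (W : Fin t → Finset α)
    (hU : ∀ i, (U i).card = a) (hW : ∀ j, (W j).card = b)
    (hUm : ∀ i i', i ≠ i' → Disjoint (U i) (U i'))
    (hWm : ∀ j j', j ≠ j' → Disjoint (W j) (W j'))
    (hUW : ∀ i j, Disjoint (U i) (W j)) :
    (∃ X : Finset α, ∀ e ∈ blowup T U W, (e ∩ X).card = 1) ∧
      sInf {m | ∃ X : Finset α, (∀ e ∈ blowup T U W, (e ∩ X).card = 1) ∧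
        X.card = m} = min s t := by
  classical
  have hUne : ∀ i, (U i).Nonempty := fun i => Finset.card_pos.mp (by rw [hU i]; exact ha)
  have hWne : ∀ j, (W j).Nonempty := fun j => Finset.card_pos.mp (by rw [hW j]; exact hb)
  choose u hu using hUne
  choose w hw using hWne
  -- the crosscut from the U side
  have hXU : ∀ e ∈ blowup T U W, (e ∩ (Finset.univ.image u)).card = 1 := by
    intro e he
    rw [mem_blowup] at he
    obtain ⟨i, j, _, rfl⟩ := he
    have : (U i ∪ W j) ∩ Finset.univ.image u = {u i} := by
      ext x
      simp only [Finset.mem_inter, Finset.mem_union, Finset.mem_image, Finset.mem_univ,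
        true_and, Finset.mem_singleton]
      constructor
      · rintro ⟨hx, i', rfl⟩
        rcases hx with hx | hx
        · by_contra hne
          have : i' ≠ i := fun h => hne (by rw [h])
          exact (Finset.disjoint_left.mp (hUm i' i this)) (hu i') hx
        · exact absurd hx (Finset.disjoint_left.mp (hUW i' j) (hu i'))
      · rintro rfl
        exact ⟨Or.inl (hu i), i, rfl⟩
    rw [this, Finset.card_singleton]
  -- the crosscut from the W side
  have hXW : ∀ e ∈ blowup T U W, (e ∩ (Finset.univ.image w)).card = 1 := by
    intro e he
    rw [mem_blowup] at he
    obtain ⟨i, j, _, rfl⟩ := he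
    have : (U i ∪ W j) ∩ Finset.univ.image w = {w j} := by
      ext x
      simp only [Finset.mem_inter, Finset.mem_union, Finset.mem_image, Finset.mem_univ,
        true_and, Finset.mem_singleton]
      constructor
      · rintro ⟨hx, j', rfl⟩
        rcases hx with hx | hx
        · exact absurd (hw j') (fun h => (Finset.disjoint_left.mp (hUW i j')) hx h)
        · by_contra hne
          have : j' ≠ j := fun h => hne (by rw [h])
          exact (Finset.disjoint_left.mp (hWm j' j this)) (hw j') hx
      · rintro rfl
        exact ⟨Or.inr (hw j), j, rfl⟩
    rw [this, Finset.card_singleton]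
  have cardU : (Finset.univ.image u).card = s := by
    rw [Finset.card_image_of_injective _ ?_, Finset.card_univ, Fintype.card_fin]
    intro i i' h
    by_contra hne
    exact (Finset.disjoint_left.mp (hUm i i' hne)) (hu i) (h ▸ hu i')
  have cardW : (Finset.univ.image w).card = t := by
    rw [Finset.card_image_of_injective _ ?_, Finset.card_univ, Fintype.card_fin]
    intro j j' h
    by_contra hne
    exact (Finset.disjoint_left.mp (hWm j j' hne)) (hw j) (h ▸ hw j')
  -- lower bound: every crosscut has at least min s t elements
  have lower : ∀ X : Finset α, (∀ e ∈ blowup T U W, (e ∩ X).card = 1) → min s t ≤ X.card := by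
    intro X hX
    let C : Fin s ⊕ Fin t → Prop := Sum.elim (fun i => (U i ∩ X).Nonempty)
      (fun j => (W j ∩ X).Nonempty)
    have edgeC : ∀ i j, T.Adj (Sum.inl i) (Sum.inr j) →
        ((U i ∩ X).card + (W j ∩ X).card = 1) := by
      intro i j hadj
      have he : U i ∪ W j ∈ blowup T U W := (mem_blowup T U W _).mpr ⟨i, j, hadj, rfl⟩
      have h1 := hX _ he
      rwa [Finset.union_inter_distrib_right, Finset.card_union_of_disjoint
        (Finset.disjoint_of_subset_left Finset.inter_subset_left
          (Finset.disjoint_of_subset_right Finset.inter_subset_left (hUW i j)))] at h1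
    have alt : ∀ v v', T.Adj v v' → (C v ↔ ¬ C v') := by
      intro v v' hadj
      match v, v' with
      | Sum.inl i, Sum.inl j => exact absurd hadj (hb1 i j)
      | Sum.inr i, Sum.inr j => exact absurd hadj (hb2 i j)
      | Sum.inl i, Sum.inr j =>
        have := edgeC i j hadj
        simp only [C, Sum.elim_inl, Sum.elim_inr]
        rw [← Finset.card_pos, ← Finset.card_pos]
        omega
      | Sum.inr j, Sum.inl i =>
        have := edgeC i j hadj.symm
        simp only [C, Sum.elim_inl, Sum.elim_inr]
        rw [← Finset.card_pos, ← Finset.card_pos]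
        omega
    let L : Fin s ⊕ Fin t → Prop := Sum.elim (fun _ => True) (fun _ => False)
    have altL : ∀ v v' : Fin s ⊕ Fin t, T.Adj v v' → (L v ↔ ¬ L v') := by
      intro v v' hadj
      match v, v' with
      | Sum.inl i, Sum.inl j => exact absurd hadj (hb1 i j)
      | Sum.inr i, Sum.inr j => exact absurd hadj (hb2 i j)
      | Sum.inl i, Sum.inr j => simp [L]
      | Sum.inr j, Sum.inl i => simp [L]
    have key : ∀ (v v' : Fin s ⊕ Fin t) (_ : T.Walk v v'),
        ((C v ↔ L v) ↔ (C v' ↔ L v')) := by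
      intro v v' p
      induction p with
      | nil => rfl
      | cons h p ih =>
        have h1 := alt _ _ h
        have h2 := altL _ _ h
        rw [← ih, h1, h2]
        exact not_iff_not
    have conn := hT.isConnected.preconnected
    set i0 : Fin s := ⟨0, hs⟩
    by_cases h0 : C (Sum.inl i0)
    · -- all left vertices in C
      have : ∀ i : Fin s, (U i ∩ X).Nonempty := by
        intro i
        obtain ⟨p⟩ := conn (Sum.inl i0) (Sum.inl i)
        have hk := key _ _ p
        simp only [L, Sum.elim_inl, iff_true] at hk
        exact hk.mp h0
      calc min s t ≤ s := min_le_left s t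
      _ ≤ X.card := card_le_aux (fun i => U i ∩ X) X (fun i => Finset.inter_subset_right)
          this (fun i j hij => Finset.disjoint_of_subset_left Finset.inter_subset_left
            (Finset.disjoint_of_subset_right Finset.inter_subset_left (hUm i j hij)))
    · have : ∀ j : Fin t, (W j ∩ X).Nonempty := by
        intro j
        obtain ⟨p⟩ := conn (Sum.inl i0) (Sum.inr j)
        have hk := key _ _ p
        simp only [L, Sum.elim_inl, Sum.elim_inr, iff_true, iff_false] at hk
        by_contra hc
        exact h0 (hk.mpr hc)
      calc min s t ≤ t := min_le_right s t
      _ ≤ X.card := card_le_aux (fun j => W j ∩ X) X (fun j => Finset.inter_subset_right)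
          this (fun i j hij => Finset.disjoint_of_subset_left Finset.inter_subset_left
            (Finset.disjoint_of_subset_right Finset.inter_subset_left (hWm i j hij)))
  refine ⟨⟨_, hXU⟩, ?_⟩
  have hmem : min s t ∈ {m | ∃ X : Finset α,
      (∀ e ∈ blowup T U W, (e ∩ X).card = 1) ∧ X.card = m} := by
    rcases le_total s t with h | h
    · exact ⟨_, hXU, by rw [cardU, min_eq_left h]⟩
    · exact ⟨_, hXW, by rw [cardW, min_eq_right h]⟩
  refine le_antisymm (Nat.sInf_le hmem) ?_
  obtain ⟨X, hX, hcard⟩ := Nat.sInf_mem (⟨_, hmem⟩ :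
    Set.Nonempty {m | ∃ X : Finset α, (∀ e ∈ blowup T U W, (e ∩ X).card = 1) ∧ X.card = m})
  rw [← hcard]
  exact lower X hX
end

section
/- Let r ≥ 3 and let T(r/2, r/2) be the (r/2, r/2)-blowup of a tree T (r even). If H is an n-vertex r-uniform T(r/2,r/2)-free hypergraph and r/2 divides n, then |H| ≤ [ex_2(2n/r, T) / C(2n/r, 2)] · C(n, r). -/
/-- The graph Turán number `ex_2(m, T)`: the maximum number of edges of a
`T`-free graph on `m` vertices. -/
noncomputable def exGraph (m : ℕ) {V : Type*} (T : SimpleGraph V) : ℕ :=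
  sSup {k | ∃ G : SimpleGraph (Fin m),
    (¬ ∃ f : V ↪ Fin m, ∀ u v, T.Adj u v → G.Adj (f u) (f v)) ∧
    G.edgeSet.ncard = k}


open Finset

lemma exists_perm_image {α : Type*} [Fintype α] [DecidableEq α] {e e' : Finset α}
    (h : e.card = e'.card) : ∃ σ : Equiv.Perm α, e.image σ = e' := by
  classical
  have h1 : Fintype.card {x // x ∈ e} = Fintype.card {x // x ∈ e'} := by
    simpa using h
  have h2 : Fintype.card {x // ¬ x ∈ e} = Fintype.card {x // ¬ x ∈ e'} := by
    rw [Fintype.card_subtype_compl, Fintype.card_subtype_compl, h1]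
  refine ⟨Equiv.subtypeCongr (Fintype.equivOfCardEq h1) (Fintype.equivOfCardEq h2), ?_⟩
  have hsub : e.image (Equiv.subtypeCongr (Fintype.equivOfCardEq h1)
      (Fintype.equivOfCardEq h2)) ⊆ e' := by
    intro y hy
    rw [Finset.mem_image] at hy
    obtain ⟨x, hx, rfl⟩ := hy
    have : (Equiv.subtypeCongr (Fintype.equivOfCardEq h1) (Fintype.equivOfCardEq h2)) x
        = ((Fintype.equivOfCardEq h1) ⟨x, hx⟩ : α) := by
      simp [Equiv.subtypeCongr, hx]
    rw [this]
    exact ((Fintype.equivOfCardEq h1) ⟨x, hx⟩).2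
  refine (Finset.eq_of_subset_of_card_le hsub ?_)
  rw [Finset.card_image_of_injective _ (Equiv.injective _), ← h]


variable {n m s : ℕ}

/-- The `i`-th block of the partition of `Fin n` induced by `f`. -/
def blockF (f : Fin n ≃ Fin m × Fin s) (i : Fin m) : Finset (Fin n) :=
  Finset.univ.filter fun x => (f x).1 = i

lemma card_blockF (f : Fin n ≃ Fin m × Fin s) (i : Fin m) : (blockF f i).card = s := by
  classical
  rw [blockF, Finset.card_equiv f (t := Finset.univ.filter fun y : Fin m × Fin s => y.1 = i)
    (by intro x; simp)]
  have : (Finset.univ.filter fun y : Fin m × Fin s => y.1 = i) = {i} ×ˢ Finset.univ := by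
    ext y; simp only [Finset.mem_filter, Finset.mem_univ, true_and, Finset.mem_product,
      Finset.mem_singleton]; tauto
  rw [this, Finset.card_product]
  simp

lemma disj_blockF (f : Fin n ≃ Fin m × Fin s) {i j : Fin m} (hij : i ≠ j) :
    Disjoint (blockF f i) (blockF f j) := by
  rw [Finset.disjoint_left]
  intro x hx hy
  simp only [blockF, Finset.mem_filter] at hx hy
  exact hij (hx.2 ▸ hy.2)

/-- Union of blocks `p.1` and `p.2`. -/
def BU (f : Fin n ≃ Fin m × Fin s) (p : Fin m × Fin m) : Finset (Fin n) :=
  blockF f p.1 ∪ blockF f p.2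

lemma card_BU (f : Fin n ≃ Fin m × Fin s) {p : Fin m × Fin m} (hp : p.1 ≠ p.2) :
    (BU f p).card = 2 * s := by
  rw [BU, Finset.card_union_of_disjoint (disj_blockF f hp), card_blockF, card_blockF]
  ring

lemma blockF_trans (σ : Equiv.Perm (Fin n)) (f : Fin n ≃ Fin m × Fin s) (i : Fin m) :
    blockF (σ.trans f) i = (blockF f i).image σ.symm := by
  ext x
  simp only [blockF, Finset.mem_filter, Finset.mem_univ, true_and, Finset.mem_image,
    Equiv.trans_apply]
  constructor
  · intro h; exact ⟨σ x, (Finset.mem_filter.mp h).2, σ.symm_apply_apply x⟩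
  · rintro ⟨y, hy, rfl⟩; exact Finset.mem_filter.mpr ⟨Finset.mem_univ _, by simpa using hy⟩

lemma BU_trans (σ : Equiv.Perm (Fin n)) (f : Fin n ≃ Fin m × Fin s) (p : Fin m × Fin m) :
    BU (σ.trans f) p = (BU f p).image σ.symm := by
  rw [BU, BU, blockF_trans, blockF_trans, Finset.image_union]

lemma fiber_card_eq (p : Fin m × Fin m) {e e' : Finset (Fin n)} (h : e.card = e'.card) :
    (Finset.univ.filter fun f : Fin n ≃ Fin m × Fin s => BU f p = e).card
    = (Finset.univ.filter fun f : Fin n ≃ Fin m × Fin s => BU f p = e').card := by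
  classical
  obtain ⟨σ, hσ⟩ := exists_perm_image (α := Fin n) (e := e') (e' := e) h.symm
  refine Finset.card_bij (fun f _ => σ.trans f) ?_ ?_ ?_
  · intro f hf
    simp only [Finset.mem_filter, Finset.mem_univ, true_and] at hf ⊢
    rw [BU_trans, hf]
    rw [← hσ, Finset.image_image]
    simp
  · intro f _ g _ hfg
    have := congrArg (fun h => σ.symm.trans h) hfg
    simpa [← Equiv.trans_assoc] using this
  · intro g hg
    refine ⟨σ.symm.trans g, ?_, ?_⟩
    · simp only [Finset.mem_filter, Finset.mem_univ, true_and] at hg ⊢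
      have : σ.symm = (σ.symm : Equiv.Perm (Fin n)) := rfl
      rw [BU_trans σ.symm g p, hg, Equiv.symm_symm, ← hσ]
    · simp [← Equiv.trans_assoc]

lemma key_pair (hn : n = m * s) (H : Finset (Finset (Fin n)))
    (hH : ∀ e ∈ H, e.card = 2 * s) {p : Fin m × Fin m} (hp : p.1 ≠ p.2) :
    (Finset.univ.filter fun f : Fin n ≃ Fin m × Fin s => BU f p ∈ H).card * n.choose (2 * s)
    = H.card * Fintype.card (Fin n ≃ Fin m × Fin s) := by
  classical
  have hcard : Fintype.card (Fin n) = Fintype.card (Fin m × Fin s) := by simp [hn]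
  have f₀ : Fin n ≃ Fin m × Fin s := Fintype.equivOfCardEq hcard
  obtain ⟨e₀, he₀c⟩ : ∃ e : Finset (Fin n), e.card = 2 * s := ⟨BU f₀ p, card_BU f₀ hp⟩
  have hfib : ∀ e : Finset (Fin n), e.card = 2 * s →
      (Finset.univ.filter fun f : Fin n ≃ Fin m × Fin s => BU f p = e).card
      = (Finset.univ.filter fun f : Fin n ≃ Fin m × Fin s => BU f p = e₀).card :=
    fun e he => fiber_card_eq p (he.trans he₀c.symm)
  -- the filtered count equals |H| * c
  have h1 : (Finset.univ.filter fun f : Fin n ≃ Fin m × Fin s => BU f p ∈ H).card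
      = H.card * (Finset.univ.filter fun f : Fin n ≃ Fin m × Fin s => BU f p = e₀).card := by
    rw [Finset.card_eq_sum_card_fiberwise (f := fun f => BU f p) (t := H)
      (s := Finset.univ.filter fun f : Fin n ≃ Fin m × Fin s => BU f p ∈ H)
      (fun f hf => (Finset.mem_filter.mp (Finset.mem_coe.mp hf)).2)]
    have hinner : ∀ e ∈ H,
        ((Finset.univ.filter fun f : Fin n ≃ Fin m × Fin s => BU f p ∈ H).filter
          fun f => BU f p = e).card
        = (Finset.univ.filter fun f : Fin n ≃ Fin m × Fin s => BU f p = e₀).card := by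
      intro e he
      rw [Finset.filter_filter]
      have hq : (Finset.univ.filter fun f : Fin n ≃ Fin m × Fin s =>
          BU f p ∈ H ∧ BU f p = e) = Finset.univ.filter fun f => BU f p = e := by
        ext f
        simp only [Finset.mem_filter, Finset.mem_univ, true_and]
        exact ⟨fun h => h.2, fun h => ⟨h ▸ he, h⟩⟩
      rw [hq]
      exact hfib e (hH e he)
    rw [Finset.sum_congr rfl hinner, Finset.sum_const, smul_eq_mul]
  -- the total count equals C(n, 2s) * c
  have h2 : Fintype.card (Fin n ≃ Fin m × Fin s) = n.choose (2 * s) *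
      (Finset.univ.filter fun f : Fin n ≃ Fin m × Fin s => BU f p = e₀).card := by
    rw [← Finset.card_univ,
      Finset.card_eq_sum_card_fiberwise (f := fun f => BU f p)
        (t := Finset.powersetCard (2 * s) Finset.univ)
        (fun f _ => by simp only [Finset.mem_coe, Finset.mem_powersetCard_univ]; exact card_BU f hp)]
    have hinner : ∀ e ∈ Finset.powersetCard (2 * s) (Finset.univ : Finset (Fin n)),
        ((Finset.univ : Finset (Fin n ≃ Fin m × Fin s)).filter fun f => BU f p = e).card
        = (Finset.univ.filter fun f : Fin n ≃ Fin m × Fin s => BU f p = e₀).card :=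
      fun e he => hfib e (Finset.mem_powersetCard_univ.mp he)
    rw [Finset.sum_congr rfl hinner, Finset.sum_const, smul_eq_mul,
      Finset.card_powersetCard, Finset.card_univ, Fintype.card_fin]
  rw [h1, h2]
  ring

lemma exGraph_bddAbove (m : ℕ) {V : Type*} (T : SimpleGraph V) :
    BddAbove {k | ∃ G : SimpleGraph (Fin m),
      (¬ ∃ f : V ↪ Fin m, ∀ u v, T.Adj u v → G.Adj (f u) (f v)) ∧
      G.edgeSet.ncard = k} := by
  refine ⟨Nat.card (Sym2 (Fin m)), ?_⟩
  rintro k ⟨G, -, rfl⟩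
  calc G.edgeSet.ncard ≤ (Set.univ : Set (Sym2 (Fin m))).ncard :=
        Set.ncard_le_ncard (Set.subset_univ _) Set.finite_univ
    _ = Nat.card (Sym2 (Fin m)) := Set.ncard_univ _

lemma card_lt_pairs (m : ℕ) :
    ((Finset.univ : Finset (Fin m × Fin m)).filter fun p => p.1 < p.2).card = m.choose 2 := by
  classical
  have hswap : ((Finset.univ : Finset (Fin m × Fin m)).filter fun p => p.1 < p.2).card
      = ((Finset.univ : Finset (Fin m × Fin m)).filter fun p => p.2 < p.1).card := by
    refine Finset.card_bij (fun p _ => (p.2, p.1)) ?_ ?_ ?_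
    · intro p hp; simp only [Finset.mem_filter, Finset.mem_univ, true_and] at hp ⊢; exact hp
    · intro p _ q _ h
      exact Prod.ext (congrArg Prod.snd h) (congrArg Prod.fst h)
    · intro p hp
      simp only [Finset.mem_filter, Finset.mem_univ, true_and] at hp
      exact ⟨(p.2, p.1), by simpa using hp, rfl⟩
  have hunion : ((Finset.univ : Finset (Fin m × Fin m)).filter fun p => p.1 < p.2)
      ∪ ((Finset.univ : Finset (Fin m × Fin m)).filter fun p => p.2 < p.1)
      = (Finset.univ : Finset (Fin m)).offDiag := by
    ext p
    simp only [Finset.mem_union, Finset.mem_filter, Finset.mem_univ, true_and,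
      Finset.mem_offDiag]
    constructor
    · rintro (h | h)
      · exact h.ne
      · exact h.ne'
    · exact fun h => h.lt_or_gt
  have hdisj : Disjoint ((Finset.univ : Finset (Fin m × Fin m)).filter fun p => p.1 < p.2)
      ((Finset.univ : Finset (Fin m × Fin m)).filter fun p => p.2 < p.1) := by
    rw [Finset.disjoint_left]
    intro p hp hq
    simp only [Finset.mem_filter, Finset.mem_univ, true_and] at hp hq
    exact absurd (hp.trans hq) (lt_irrefl _)
  have hcard := Finset.card_union_of_disjoint hdisj
  rw [hunion, Finset.offDiag_card, Finset.card_univ, Fintype.card_fin, ← hswap] at hcard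
  have h2 : 2 * m.choose 2 = m * m - m := by
    rw [Nat.choose_two_right, Nat.two_mul_div_two_of_even (Nat.even_mul_pred_self m)]
    cases m with
    | zero => rfl
    | succ k => simp [Nat.succ_sub_one, Nat.mul_sub, Nat.mul_comm]; ring_nf; omega
  omega

lemma pairs_le_ex {V : Type*} [Fintype V] (T : SimpleGraph V)
    (H : Finset (Finset (Fin n))) (f : Fin n ≃ Fin m × Fin s)
    (hfree : ¬ ∃ g : V → Finset (Fin n), (∀ v, (g v).card = s) ∧
      (∀ u v, u ≠ v → Disjoint (g u) (g v)) ∧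
      ∀ u v, T.Adj u v → g u ∪ g v ∈ H) :
    (((Finset.univ : Finset (Fin m × Fin m)).filter fun p => p.1 < p.2).filter
      fun p => BU f p ∈ H).card ≤ exGraph m T := by
  classical
  set G : SimpleGraph (Fin m) := SimpleGraph.fromRel (fun i j => BU f (i, j) ∈ H) with hG
  have hGfree : ¬ ∃ φ : V ↪ Fin m, ∀ u v, T.Adj u v → G.Adj (φ u) (φ v) := by
    rintro ⟨φ, hφ⟩
    refine hfree ⟨fun v => blockF f (φ v), fun v => card_blockF f (φ v), ?_, ?_⟩
    · intro u v huv
      exact disj_blockF f (fun h => huv (φ.injective h))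
    · intro u v huv
      have := hφ u v huv
      rw [hG, SimpleGraph.fromRel_adj] at this
      rcases this.2 with h | h
      · exact h
      · have : BU f (φ v, φ u) = blockF f (φ u) ∪ blockF f (φ v) := by
          rw [BU]; exact Finset.union_comm _ _
        rw [← this]; exact h
  have hle : (((Finset.univ : Finset (Fin m × Fin m)).filter fun p => p.1 < p.2).filter
      fun p => BU f p ∈ H).card ≤ G.edgeSet.ncard := by
    set Pf := (((Finset.univ : Finset (Fin m × Fin m)).filter fun p => p.1 < p.2).filter
      fun p => BU f p ∈ H) with hPf
    have hinj : Set.InjOn (fun p : Fin m × Fin m => Sym2.mk p.1 p.2) ↑Pf := by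
      intro p hp q hq h
      simp only [hPf, Finset.coe_filter, Set.mem_setOf_eq, Finset.mem_filter,
        Finset.mem_univ, true_and] at hp hq
      rcases Sym2.eq_iff.mp h with ⟨h1, h2⟩ | ⟨h1, h2⟩
      · exact Prod.ext h1 h2
      · exfalso
        have h3 := hp.1
        rw [h1, h2] at h3
        exact absurd (hq.1.trans h3) (lt_irrefl _)
    have hsub : (fun p : Fin m × Fin m => Sym2.mk p.1 p.2) '' ↑Pf ⊆ G.edgeSet := by
      rintro x ⟨p, hp, rfl⟩
      simp only [hPf, Finset.coe_filter, Set.mem_setOf_eq, Finset.mem_filter,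
        Finset.mem_univ, true_and] at hp
      rw [SimpleGraph.mem_edgeSet, hG, SimpleGraph.fromRel_adj]
      exact ⟨hp.1.ne, Or.inl hp.2⟩
    calc Pf.card = (↑Pf : Set (Fin m × Fin m)).ncard := (Set.ncard_coe_finset _).symm
      _ = ((fun p : Fin m × Fin m => Sym2.mk p.1 p.2) '' ↑Pf).ncard :=
          (Set.ncard_image_of_injOn hinj).symm
      _ ≤ G.edgeSet.ncard := Set.ncard_le_ncard hsub (Set.toFinite _)
  refine hle.trans (le_csSup (exGraph_bddAbove m T) ⟨G, hGfree, rfl⟩)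

/-- Frankl's partition argument: if `r` is even, `r/2 ∣ n`, and `H` is an
`n`-vertex `r`-uniform hypergraph with no copy of the `(r/2, r/2)`-blowup of a
tree `T`, then `|H| ≤ [ex_2(2n/r, T) / C(2n/r, 2)] · C(n, r)`. -/
theorem stmt_15 (r n : ℕ) (hr : 3 ≤ r) (hre : 2 ∣ r) (hdvd : r / 2 ∣ n)
    {V : Type*} [Fintype V] (T : SimpleGraph V) (hT : T.IsTree)
    (H : Finset (Finset (Fin n))) (hH : ∀ e ∈ H, e.card = r)
    (hfree : ¬ ∃ g : V → Finset (Fin n), (∀ v, (g v).card = r / 2) ∧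
      (∀ u v, u ≠ v → Disjoint (g u) (g v)) ∧
      ∀ u v, T.Adj u v → g u ∪ g v ∈ H) :
    H.card * Nat.choose (2 * n / r) 2 ≤ exGraph (2 * n / r) T * Nat.choose n r := by
  classical
  obtain ⟨s, hs⟩ := hre
  subst hs
  have hs2 : 2 * s / 2 = s := by omega
  rw [hs2] at hdvd hfree
  have hs0 : 0 < s := by omega
  set m := n / s with hm
  have hn : n = m * s := (Nat.div_mul_cancel hdvd).symm
  have h2nr : 2 * n / (2 * s) = m := by
    rw [hm, Nat.mul_div_mul_left _ _ (by norm_num : (0:ℕ) < 2)]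
  rw [h2nr]
  set P := (Finset.univ : Finset (Fin m × Fin m)).filter fun p => p.1 < p.2 with hP
  set N := Fintype.card (Fin n ≃ Fin m × Fin s) with hN
  have hN0 : 0 < N := Fintype.card_pos_iff.mpr ⟨Fintype.equivOfCardEq (by simp [hn])⟩
  set A := ∑ p ∈ P, (Finset.univ.filter fun f : Fin n ≃ Fin m × Fin s => BU f p ∈ H).card
    with hA
  have step1 : A * n.choose (2 * s) = m.choose 2 * (H.card * N) := by
    rw [hA, Finset.sum_mul,
      Finset.sum_congr rfl (fun p hp =>
        key_pair hn H hH ((Finset.mem_filter.mp hp).2.ne)),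
      Finset.sum_const, hP, card_lt_pairs, smul_eq_mul]
  have step2 : A = ∑ f : Fin n ≃ Fin m × Fin s, (P.filter fun p => BU f p ∈ H).card := by
    rw [hA]
    simp_rw [Finset.card_filter]
    exact Finset.sum_comm
  have step3 : A ≤ N * exGraph m T := by
    rw [step2]
    calc ∑ f : Fin n ≃ Fin m × Fin s, (P.filter fun p => BU f p ∈ H).card
        ≤ ∑ _f : Fin n ≃ Fin m × Fin s, exGraph m T :=
          Finset.sum_le_sum (fun f _ => pairs_le_ex T H f hfree)
      _ = N * exGraph m T := by
          rw [Finset.sum_const, Finset.card_univ, smul_eq_mul, hN]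
  have final : H.card * m.choose 2 * N ≤ exGraph m T * n.choose (2 * s) * N := by
    calc H.card * m.choose 2 * N = m.choose 2 * (H.card * N) := by ring
      _ = A * n.choose (2 * s) := step1.symm
      _ ≤ (N * exGraph m T) * n.choose (2 * s) := Nat.mul_le_mul_right _ step3
      _ = exGraph m T * n.choose (2 * s) * N := by ring
  exact Nat.le_of_mul_le_mul_right final hN0
end

section
/- Let r ≥ 2 and let H be the r-uniform hypergraph on [n] whose edges are e ∪ {i} for i ∈ {1,2}, where G_1 ⊔ G_2 is any partition of all (r−1)-subsets of {3,…,n} and e ranges over G_i. Then |H| = C(n−2, r−1), and H contains no copy of the (r−1,1)-blowup of the path with four edges. -/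
/-- The hypergraph built from a partition `G₁ ⊔ G₂` of the `(r-1)`-subsets of
`{3,…,n}`: edges `e ∪ {i}` for `e ∈ Gᵢ`, `i ∈ {1,2}`. -/
def splitGraph (G₁ G₂ : Finset (Finset ℕ)) : Finset (Finset ℕ) :=
  G₁.image (insert 1) ∪ G₂.image (insert 2)

lemma splitGraph_key (n r : ℕ) (G₁ G₂ : Finset (Finset ℕ))
    (hpart : G₁ ∪ G₂ = (Finset.Icc 3 n).powersetCard (r - 1))
    {b : ℕ} {X : Finset ℕ} (hb : b ∉ X) (h : insert b X ∈ splitGraph G₁ G₂) :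
    (b = 1 ∧ X ∈ G₁) ∨ (b = 2 ∧ X ∈ G₂) ∨
      (3 ≤ b ∧ ∃ k, (k = 1 ∨ k = 2) ∧ k ∈ X) := by
  simp only [splitGraph, Finset.mem_union, Finset.mem_image] at h
  rcases h with ⟨e, he, heq⟩ | ⟨e, he, heq⟩
  · have hsub : e ⊆ Finset.Icc 3 n := by
      have := hpart ▸ Finset.mem_union_left G₂ he
      exact (Finset.mem_powersetCard.mp this).1
    have h1e : (1 : ℕ) ∉ e := fun h1 => by
      have := Finset.mem_Icc.mp (hsub h1); omega
    by_cases hb1 : b = 1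
    · subst hb1
      have : X = e := by
        have := congrArg (Finset.erase · 1) heq
        simpa [Finset.erase_insert h1e, Finset.erase_insert hb] using this.symm
      exact Or.inl ⟨rfl, this ▸ he⟩
    · have h1 : (1 : ℕ) ∈ insert b X := heq ▸ Finset.mem_insert_self 1 e
      have h1X : (1 : ℕ) ∈ X := by
        rcases Finset.mem_insert.mp h1 with h | h
        · omega
        · exact h
      have hbe : b ∈ e := by
        have : b ∈ insert (1 : ℕ) e := heq ▸ Finset.mem_insert_self b X
        rcases Finset.mem_insert.mp this with h | h
        · omega
        · exact h
      have := Finset.mem_Icc.mp (hsub hbe)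
      exact Or.inr (Or.inr ⟨this.1, 1, Or.inl rfl, h1X⟩)
  · have hsub : e ⊆ Finset.Icc 3 n := by
      have := hpart ▸ Finset.mem_union_right G₁ he
      exact (Finset.mem_powersetCard.mp this).1
    have h2e : (2 : ℕ) ∉ e := fun h2 => by
      have := Finset.mem_Icc.mp (hsub h2); omega
    by_cases hb2 : b = 2
    · subst hb2
      have : X = e := by
        have := congrArg (Finset.erase · 2) heq
        simpa [Finset.erase_insert h2e, Finset.erase_insert hb] using this.symm
      exact Or.inr (Or.inl ⟨rfl, this ▸ he⟩)
    · have h2 : (2 : ℕ) ∈ insert b X := heq ▸ Finset.mem_insert_self 2 e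
      have h2X : (2 : ℕ) ∈ X := by
        rcases Finset.mem_insert.mp h2 with h | h
        · omega
        · exact h
      have hbe : b ∈ e := by
        have : b ∈ insert (2 : ℕ) e := heq ▸ Finset.mem_insert_self b X
        rcases Finset.mem_insert.mp this with h | h
        · omega
        · exact h
      have := Finset.mem_Icc.mp (hsub hbe)
      exact Or.inr (Or.inr ⟨this.1, 2, Or.inr rfl, h2X⟩)

/-- The no-stability example: `H` has `C(n-2, r-1)` edges and contains no copy
of the `(r-1,1)`-blowup of the path with four edges. -/
theorem stmt_18 (n r : ℕ) (hr : 2 ≤ r) (hn : 2 ≤ n)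
    (G₁ G₂ : Finset (Finset ℕ))
    (hpart : G₁ ∪ G₂ = (Finset.Icc 3 n).powersetCard (r - 1))
    (hdisj : Disjoint G₁ G₂) :
    (splitGraph G₁ G₂).card = Nat.choose (n - 2) (r - 1) ∧
    ¬ ∃ (A₀ A₂ A₄ : Finset ℕ) (b₁ b₃ : ℕ),
      A₀.card = r - 1 ∧ A₂.card = r - 1 ∧ A₄.card = r - 1 ∧
      Disjoint A₀ A₂ ∧ Disjoint A₀ A₄ ∧ Disjoint A₂ A₄ ∧
      b₁ ≠ b₃ ∧ b₁ ∉ A₀ ∪ A₂ ∪ A₄ ∧ b₃ ∉ A₀ ∪ A₂ ∪ A₄ ∧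
      insert b₁ A₀ ∈ splitGraph G₁ G₂ ∧ insert b₁ A₂ ∈ splitGraph G₁ G₂ ∧
      insert b₃ A₂ ∈ splitGraph G₁ G₂ ∧ insert b₃ A₄ ∈ splitGraph G₁ G₂ := by
  have hmem : ∀ e ∈ G₁ ∪ G₂, e ⊆ Finset.Icc 3 n := fun e he =>
    (Finset.mem_powersetCard.mp (hpart ▸ he)).1
  have hnot1 : ∀ e ∈ G₁ ∪ G₂, (1 : ℕ) ∉ e := fun e he h1 => by
    have := Finset.mem_Icc.mp (hmem e he h1); omega
  have hnot2 : ∀ e ∈ G₁ ∪ G₂, (2 : ℕ) ∉ e := fun e he h2 => by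
    have := Finset.mem_Icc.mp (hmem e he h2); omega
  constructor
  · -- cardinality
    have hdisjI : Disjoint (G₁.image (insert 1)) (G₂.image (insert 2)) := by
      rw [Finset.disjoint_left]
      rintro s hs₁ hs₂
      simp only [Finset.mem_image] at hs₁ hs₂
      obtain ⟨e, he, rfl⟩ := hs₁
      obtain ⟨f, hf, hef⟩ := hs₂
      have h1 : (1 : ℕ) ∈ insert (2 : ℕ) f := hef ▸ Finset.mem_insert_self 1 e
      rcases Finset.mem_insert.mp h1 with h | h
      · omega
      · exact hnot1 f (Finset.mem_union_right G₁ hf) h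
    rw [splitGraph, Finset.card_union_of_disjoint hdisjI,
      Finset.card_image_of_injOn, Finset.card_image_of_injOn]
    · rw [← Finset.card_union_of_disjoint hdisj, hpart, Finset.card_powersetCard,
        Nat.card_Icc]
      congr 1
    · intro e he f hf hef
      have h1e := hnot1 e (Finset.mem_union_right G₁ he)
      have h1f := hnot1 f (Finset.mem_union_right G₁ hf)
      have := congrArg (Finset.erase · 2) hef
      simpa [Finset.erase_insert (hnot2 e (Finset.mem_union_right G₁ he)),
        Finset.erase_insert (hnot2 f (Finset.mem_union_right G₁ hf))] using this
    · intro e he f hf hef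
      have := congrArg (Finset.erase · 1) hef
      simpa [Finset.erase_insert (hnot1 e (Finset.mem_union_left G₂ he)),
        Finset.erase_insert (hnot1 f (Finset.mem_union_left G₂ hf))] using this
  · rintro ⟨A₀, A₂, A₄, b₁, b₃, hc0, hc2, hc4, hd02, hd04, hd24, hne, hb1, hb3,
      e1, e2, e3, e4⟩
    simp only [Finset.mem_union, not_or] at hb1 hb3
    have k1 := splitGraph_key n r G₁ G₂ hpart hb1.1.1 e1
    have k2 := splitGraph_key n r G₁ G₂ hpart hb1.1.2 e2
    have k3 := splitGraph_key n r G₁ G₂ hpart hb3.1.2 e3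
    have k4 := splitGraph_key n r G₁ G₂ hpart hb3.2 e4
    have hsub2 : ∀ h : A₂ ∈ G₁ ∪ G₂, False → True := fun _ _ => trivial
    -- helper: if A₂ ∈ G₁ ∪ G₂ then no 1 or 2 in A₂
    rcases k2 with ⟨hb11, hA2⟩ | ⟨hb12, hA2⟩ | ⟨hb1ge, k, hk, hkA2⟩
    · -- b₁ = 1, A₂ ∈ G₁
      rcases k3 with ⟨hb31, hA2'⟩ | ⟨hb32, hA2'⟩ | ⟨_, k, hk, hkA2⟩
      · omega
      · exact Finset.disjoint_left.mp hdisj hA2 hA2'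
      · rcases hk with rfl | rfl
        · exact hnot1 A₂ (Finset.mem_union_left G₂ hA2) hkA2
        · exact hnot2 A₂ (Finset.mem_union_left G₂ hA2) hkA2
    · -- b₁ = 2, A₂ ∈ G₂
      rcases k3 with ⟨hb31, hA2'⟩ | ⟨hb32, hA2'⟩ | ⟨_, k, hk, hkA2⟩
      · exact Finset.disjoint_left.mp hdisj hA2' hA2
      · omega
      · rcases hk with rfl | rfl
        · exact hnot1 A₂ (Finset.mem_union_right G₁ hA2) hkA2
        · exact hnot2 A₂ (Finset.mem_union_right G₁ hA2) hkA2
    · -- 3 ≤ b₁, k ∈ A₂ with k ∈ {1,2}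
      rcases k1 with ⟨h, _⟩ | ⟨h, _⟩ | ⟨_, k', hk', hk'A0⟩
      · omega
      · omega
      · rcases k3 with ⟨hb31, hA2'⟩ | ⟨hb32, hA2'⟩ | ⟨hb3ge, _, _, _⟩
        · rcases hk with rfl | rfl
          · exact hnot1 A₂ (Finset.mem_union_left G₂ hA2') hkA2
          · exact hnot2 A₂ (Finset.mem_union_left G₂ hA2') hkA2
        · rcases hk with rfl | rfl
          · exact hnot1 A₂ (Finset.mem_union_right G₁ hA2') hkA2
          · exact hnot2 A₂ (Finset.mem_union_right G₁ hA2') hkA2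
        · rcases k4 with ⟨h, _⟩ | ⟨h, _⟩ | ⟨_, k'', hk'', hk''A4⟩
          · omega
          · omega
          · have h1 : k ≠ k' := fun h => Finset.disjoint_left.mp hd02 (h ▸ hk'A0) hkA2
            have h2 : k ≠ k'' := fun h =>
              Finset.disjoint_left.mp hd24 hkA2 (h ▸ hk''A4)
            have h3 : k' ≠ k'' := fun h =>
              Finset.disjoint_left.mp hd04 hk'A0 (h ▸ hk''A4)
            omega
end
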